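/- arXiv:1010.2162 — 3 statements merged into one kernel-verified Lean document; each statement's English description precedes it below -/
import Mathlib

section
/- For any η > 0, the value limsup_{T→∞} (1/T) log Σ_{ω∈C, T−η < S_ω ψ ≤ T} exp(S_ω φ) equals the infimum of all β ∈ ℝ such that limsup_{T→∞} Σ_{ω∈C, T < S_ω ψ} exp(S_ω φ − β S_ω ψ) < ∞. In particular, the left-hand side is independent of the choice of η > 0. -/
open Filter Topology
open scoped ENNReal

variable {I : Type*}

/-- The topological Markov shift with alphabet `I` and incidence relation `A`. -/
abbrev Shift (A : I → I → Prop) := {x : ℕ → I // ∀ i, A (x i) (x (i + 1))}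

/-- The left shift map. -/
def shiftMap (A : I → I → Prop) : Shift A → Shift A :=
  fun x => ⟨fun n => x.1 (n + 1), fun i => x.2 (i + 1)⟩

/-- The set of admissible (nonempty) finite words. -/
def Words (A : I → I → Prop) : Set (List I) :=
  {w | w ≠ [] ∧ ∀ i, (h : i + 1 < w.length) → A (w.get ⟨i, by omega⟩) (w.get ⟨i + 1, h⟩)}

/-- The cylinder set of a finite word. -/
def cylinder (A : I → I → Prop) (w : List I) : Set (Shift A) :=
  {x | ∀ i, (h : i < w.length) → x.1 i = w.get ⟨i, h⟩}

/-- Birkhoff sum of length `n`. -/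
def birkhoff (A : I → I → Prop) (f : Shift A → ℝ) (n : ℕ) (x : Shift A) : ℝ :=
  ∑ k ∈ Finset.range n, f ((shiftMap A)^[k] x)

/-- `S_ω f`: the supremum over the cylinder of `ω` of the Birkhoff sum of length `|ω|`. -/
noncomputable def S (A : I → I → Prop) (f : Shift A → ℝ) (w : List I) : ℝ :=
  sSup (birkhoff A f w.length '' cylinder A w)

/-- Logarithm on `ℝ≥0∞` with values in `EReal`. -/
noncomputable def elog (x : ℝ≥0∞) : EReal :=
  if x = 0 then ⊥ else if x = ⊤ then ⊤ else ((Real.log x.toReal : ℝ) : EReal)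

/-- The partition function `Σ_{ω∈C, T−η<S_ω ψ≤T} exp (S_ω φ)`. -/
noncomputable def partSum (A : I → I → Prop) (φ ψ : Shift A → ℝ) (C : Set (List I))
    (η T : ℝ) : ℝ≥0∞ :=
  ∑' w : {w : List I // w ∈ C ∧ T - η < S A ψ w ∧ S A ψ w ≤ T},
    ENNReal.ofReal (Real.exp (S A φ w.1))

/-- The `ψ`-induced pressure of `φ` with respect to `C` (with parameter `η`). -/
noncomputable def pressure (A : I → I → Prop) (φ ψ : Shift A → ℝ) (C : Set (List I))
    (η : ℝ) : EReal :=
  limsup (fun T : ℝ => ((T⁻¹ : ℝ) : EReal) * elog (partSum A φ ψ C η T)) atTop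


/-- The tail sum `Σ_{ω ∈ C, T < S_ω ψ} exp (S_ω φ - β S_ω ψ)`. -/
noncomputable def tailSum (A : I → I → Prop) (φ ψ : Shift A → ℝ) (C : Set (List I))
    (β T : ℝ) : ℝ≥0∞ :=
  ∑' w : {w : List I // w ∈ C ∧ T < S A ψ w},
    ENNReal.ofReal (Real.exp (S A φ w.1 - β * S A ψ w.1))

lemma elog_le_coe_of_le {x : ℝ≥0∞} {u : ℝ} (h : x ≤ ENNReal.ofReal (Real.exp u)) :
    elog x ≤ (u : EReal) := by
  unfold elog
  split_ifs with h0 ht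
  · exact bot_le
  · exact absurd ht (lt_of_le_of_lt h ENNReal.ofReal_lt_top).ne
  · have hx : x.toReal ≤ Real.exp u :=
      ENNReal.toReal_le_of_le_ofReal (Real.exp_nonneg u) h
    have hp : 0 < x.toReal := ENNReal.toReal_pos h0 ht
    exact EReal.coe_le_coe_iff.mpr ((Real.log_le_iff_le_exp hp).mpr hx)

lemma le_ofReal_exp_of_elog_le {x : ℝ≥0∞} {u : ℝ} (h : elog x ≤ (u : EReal)) :
    x ≤ ENNReal.ofReal (Real.exp u) := by
  unfold elog at h
  split_ifs at h with h0 ht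
  · simp [h0]
  · exact absurd h (by simp)
  · have hL : Real.log x.toReal ≤ u := EReal.coe_le_coe_iff.mp h
    have hp : 0 < x.toReal := ENNReal.toReal_pos h0 ht
    exact (ENNReal.le_ofReal_iff_toReal_le ht (Real.exp_nonneg u)).mpr
      ((Real.log_le_iff_le_exp hp).mp hL)

lemma elog_le_of_inv_mul_lt {T r : ℝ} {y : EReal} (hT : 0 < T)
    (h : ((T⁻¹ : ℝ) : EReal) * y < (r : EReal)) : y ≤ ((r * T : ℝ) : EReal) := by
  induction y using EReal.rec with
  | bot => exact bot_le
  | top =>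
    rw [EReal.coe_mul_top_of_pos (by positivity : (0:ℝ) < T⁻¹)] at h
    exact absurd h (not_top_lt)
  | coe a =>
    rw [← EReal.coe_mul, EReal.coe_lt_coe_iff] at h
    refine EReal.coe_le_coe_iff.mpr ?_
    have h2 := mul_lt_mul_of_pos_left h hT
    rw [← mul_assoc, mul_inv_cancel₀ hT.ne', one_mul] at h2
    linarith [h2]

lemma inv_mul_le_of_le_coe {T u : ℝ} {y : EReal} (hT : 0 < T) (h : y ≤ (u : EReal)) :
    ((T⁻¹ : ℝ) : EReal) * y ≤ ((T⁻¹ * u : ℝ) : EReal) := by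
  induction y using EReal.rec with
  | bot =>
    rw [EReal.coe_mul_bot_of_pos (by positivity : (0:ℝ) < T⁻¹)]
    exact bot_le
  | top => exact absurd h (by simp)
  | coe a =>
    rw [← EReal.coe_mul, EReal.coe_le_coe_iff]
    exact mul_le_mul_of_nonneg_left (EReal.coe_le_coe_iff.mp h) (by positivity)


section Aux
variable {I : Type*}

lemma partSum_eq (A : I → I → Prop) (φ ψ : Shift A → ℝ) (C : Set (List I)) (η T : ℝ) :
    partSum A φ ψ C η T =
      ∑' w : List I, Set.indicator {w | w ∈ C ∧ T - η < S A ψ w ∧ S A ψ w ≤ T}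
        (fun w => ENNReal.ofReal (Real.exp (S A φ w))) w := by
  rw [partSum]
  exact tsum_subtype {w | w ∈ C ∧ T - η < S A ψ w ∧ S A ψ w ≤ T}
    (fun w => ENNReal.ofReal (Real.exp (S A φ w)))

lemma tailSum_eq (A : I → I → Prop) (φ ψ : Shift A → ℝ) (C : Set (List I)) (β T : ℝ) :
    tailSum A φ ψ C β T =
      ∑' w : List I, Set.indicator {w | w ∈ C ∧ T < S A ψ w}
        (fun w => ENNReal.ofReal (Real.exp (S A φ w - β * S A ψ w))) w := by
  rw [tailSum]
  exact tsum_subtype {w | w ∈ C ∧ T < S A ψ w}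
    (fun w => ENNReal.ofReal (Real.exp (S A φ w - β * S A ψ w)))

end Aux

section LemB
variable {I : Type*}

lemma pressure_le_of_feasible (A : I → I → Prop) (φ ψ : Shift A → ℝ) (C : Set (List I))
    {η : ℝ} (hη : 0 < η) (β : ℝ)
    (hβ : limsup (fun T : ℝ => tailSum A φ ψ C β T) atTop < ⊤) :
    pressure A φ ψ C η ≤ (β : EReal) := by
  obtain ⟨M, hM1, hM2⟩ := exists_between hβ
  have hev : ∀ᶠ T in atTop, tailSum A φ ψ C β T < M :=
    eventually_lt_of_limsup_lt hM1
  set m : ℝ := max M.toReal 1 with hm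
  have hm1 : (1:ℝ) ≤ m := le_max_right _ _
  have hMm : M ≤ ENNReal.ofReal m :=
    calc M = ENNReal.ofReal M.toReal := (ENNReal.ofReal_toReal hM2.ne).symm
    _ ≤ ENNReal.ofReal m := ENNReal.ofReal_le_ofReal (le_max_left _ _)
  set c : ℝ := |β| * η + Real.log m with hc
  have key : ∀ T : ℝ, tailSum A φ ψ C β (T - η) ≤ ENNReal.ofReal m →
      partSum A φ ψ C η T ≤ ENNReal.ofReal (Real.exp (β * T + c)) := by
    intro T hZ
    have h1 : partSum A φ ψ C η T ≤
        ENNReal.ofReal (Real.exp (β * T + |β| * η)) * tailSum A φ ψ C β (T - η) := by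
      rw [partSum_eq, tailSum_eq, ← ENNReal.tsum_mul_left]
      refine ENNReal.tsum_le_tsum fun w => ?_
      by_cases hw : w ∈ {w | w ∈ C ∧ T - η < S A ψ w ∧ S A ψ w ≤ T}
      · rw [Set.indicator_of_mem hw]
        obtain ⟨hw1, h2, h3⟩ := hw
        rw [Set.indicator_of_mem (show w ∈ {w | w ∈ C ∧ T - η < S A ψ w} from ⟨hw1, h2⟩)]
        rw [← ENNReal.ofReal_mul (Real.exp_nonneg _), ← Real.exp_add]
        apply ENNReal.ofReal_le_ofReal
        apply Real.exp_le_exp.mpr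
        have habs : (0:ℝ) ≤ |β| * η := mul_nonneg (abs_nonneg β) hη.le
        rcases le_or_gt 0 β with hb | hb
        · have := mul_le_mul_of_nonneg_left h3 hb
          linarith
        · have h4 : β * S A ψ w < β * (T - η) := by
            have := mul_lt_mul_of_neg_left h2 hb
            linarith
          rw [abs_of_neg hb]
          linarith
      · rw [Set.indicator_of_notMem hw]
        exact zero_le
    calc partSum A φ ψ C η T ≤ _ := h1
      _ ≤ ENNReal.ofReal (Real.exp (β * T + |β| * η)) * ENNReal.ofReal m :=
        mul_le_mul_right hZ _
      _ = ENNReal.ofReal (Real.exp (β * T + |β| * η) * m) :=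
        (ENNReal.ofReal_mul (Real.exp_nonneg _)).symm
      _ = ENNReal.ofReal (Real.exp (β * T + c)) := by
        have hm0 : (0:ℝ) < m := lt_of_lt_of_le one_pos hm1
        congr 1
        rw [show β * T + c = (β * T + |β| * η) + Real.log m from by rw [hc]; ring,
          Real.exp_add (β * T + |β| * η) (Real.log m), Real.exp_log hm0]
  have hshift : ∀ᶠ T in atTop, tailSum A φ ψ C β (T - η) < M := by
    have ht : Tendsto (fun T : ℝ => T - η) atTop atTop := by
      simpa [sub_eq_add_neg] using
        tendsto_atTop_add_const_right atTop (-η) (tendsto_id (α := ℝ))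
    exact ht.eventually hev
  have hev2 : ∀ᶠ T in atTop, ((T⁻¹ : ℝ) : EReal) * elog (partSum A φ ψ C η T) ≤
      ((β + c * T⁻¹ : ℝ) : EReal) := by
    filter_upwards [hshift, eventually_gt_atTop 0] with T hZ hT0
    have hp := key T (le_trans hZ.le hMm)
    have h3 : elog (partSum A φ ψ C η T) ≤ ((β * T + c : ℝ) : EReal) :=
      elog_le_coe_of_le hp
    have h4 := inv_mul_le_of_le_coe hT0 h3
    refine le_trans h4 (le_of_eq ?_)
    norm_cast
    field_simp
  have hlim : Tendsto (fun T : ℝ => ((β + c * T⁻¹ : ℝ) : EReal)) atTop (𝓝 (β : EReal)) := by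
    rw [EReal.tendsto_coe]
    have : Tendsto (fun T : ℝ => β + c * T⁻¹) atTop (𝓝 (β + c * 0)) :=
      tendsto_const_nhds.add (tendsto_const_nhds.mul tendsto_inv_atTop_zero)
    simpa using this
  calc pressure A φ ψ C η ≤ limsup (fun T : ℝ => ((β + c * T⁻¹ : ℝ) : EReal)) atTop :=
        limsup_le_limsup hev2
    _ = (β : EReal) := hlim.limsup_eq

end LemB

section LemA
variable {I : Type*}

lemma band_sum_le (A : I → I → Prop) (φ ψ : Shift A → ℝ) (C : Set (List I))
    (η β T' d : ℝ) (hd : ∀ s : ℝ, T' - η < s → s ≤ T' → -(β * s) ≤ d) :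
    (∑' w : List I, Set.indicator {w | w ∈ C ∧ T' - η < S A ψ w ∧ S A ψ w ≤ T'}
      (fun w => ENNReal.ofReal (Real.exp (S A φ w - β * S A ψ w))) w)
      ≤ ENNReal.ofReal (Real.exp d) * partSum A φ ψ C η T' := by
  rw [partSum_eq, ← ENNReal.tsum_mul_left]
  refine ENNReal.tsum_le_tsum fun w => ?_
  by_cases hw : w ∈ {w | w ∈ C ∧ T' - η < S A ψ w ∧ S A ψ w ≤ T'}
  · rw [Set.indicator_of_mem hw, Set.indicator_of_mem hw,
      ← ENNReal.ofReal_mul (Real.exp_nonneg _), ← Real.exp_add]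
    refine ENNReal.ofReal_le_ofReal (Real.exp_le_exp.mpr ?_)
    obtain ⟨_, h2, h3⟩ := hw
    have := hd _ h2 h3
    linarith
  · rw [Set.indicator_of_notMem hw, Set.indicator_of_notMem hw, mul_zero]

lemma feasible_of_pressure_lt (A : I → I → Prop) (φ ψ : Shift A → ℝ) (C : Set (List I))
    {η : ℝ} (hη : 0 < η) (β : ℝ) (hβ : pressure A φ ψ C η < (β : EReal)) :
    limsup (fun T : ℝ => tailSum A φ ψ C β T) atTop < ⊤ := by
  obtain ⟨r, hPr, hrβ⟩ := EReal.exists_between_coe_real hβ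
  have hrβ' : r < β := by exact_mod_cast hrβ
  have hev : ∀ᶠ T in atTop, partSum A φ ψ C η T ≤ ENNReal.ofReal (Real.exp (r * T)) := by
    filter_upwards [eventually_lt_of_limsup_lt hPr, eventually_gt_atTop 0] with T hT hT0
    exact le_ofReal_exp_of_elog_le (elog_le_of_inv_mul_lt hT0 hT)
  rw [eventually_atTop] at hev
  obtain ⟨T₀, hT₀⟩ := hev
  set x : ℝ≥0∞ := ENNReal.ofReal (Real.exp ((r - β) * η)) with hx
  have hx1 : x < 1 := by
    rw [hx, ENNReal.ofReal_lt_one]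
    exact Real.exp_lt_one_iff.mpr (by nlinarith)
  set K : ℝ≥0∞ := ENNReal.ofReal (Real.exp (|β| * η + r * η)) * ∑' n : ℕ, x ^ n with hK
  have hKlt : K < ⊤ := by
    rw [hK, ENNReal.tsum_geometric]
    refine ENNReal.mul_lt_top ENNReal.ofReal_lt_top ?_
    rw [ENNReal.inv_lt_top]
    exact tsub_pos_of_lt hx1
  have main : ∀ T : ℝ, T₀ ≤ T → 0 ≤ T → tailSum A φ ψ C β T ≤ K := by
    intro T hT1 hT2
    rw [tailSum_eq]
    have step1 : ∀ w : List I,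
        Set.indicator {w | w ∈ C ∧ T < S A ψ w}
          (fun w => ENNReal.ofReal (Real.exp (S A φ w - β * S A ψ w))) w ≤
        ∑' n : ℕ, Set.indicator
          {w | w ∈ C ∧ (T + (n + 1) * η) - η < S A ψ w ∧ S A ψ w ≤ T + (n + 1) * η}
          (fun w => ENNReal.ofReal (Real.exp (S A φ w - β * S A ψ w))) w := by
      intro w
      by_cases hw : w ∈ {w | w ∈ C ∧ T < S A ψ w}
      · obtain ⟨hw1, hw2⟩ := hw
        set q : ℝ := (S A ψ w - T) / η with hq
        have hq0 : 0 < q := div_pos (by linarith) hη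
        set n : ℕ := ⌈q⌉₊ - 1 with hn
        have hceil : 1 ≤ ⌈q⌉₊ := Nat.one_le_ceil_iff.mpr hq0
        have hn1 : (n : ℝ) + 1 = (⌈q⌉₊ : ℝ) := by
          have h7 : n + 1 = ⌈q⌉₊ := by omega
          exact_mod_cast h7
        have hmem : w ∈ {w | w ∈ C ∧ (T + ((n:ℝ) + 1) * η) - η < S A ψ w ∧
            S A ψ w ≤ T + ((n:ℝ) + 1) * η} := by
          refine ⟨hw1, ?_, ?_⟩
          · have h5 : (n : ℝ) < q := by
              have := Nat.ceil_lt_add_one hq0.le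
              linarith [hn1]
            have h6 := (lt_div_iff₀ hη).mp h5
            linarith
          · have h6 : q ≤ (n : ℝ) + 1 := by rw [hn1]; exact Nat.le_ceil q
            have h7 := (div_le_iff₀ hη).mp h6
            linarith
        calc Set.indicator {w | w ∈ C ∧ T < S A ψ w}
              (fun w => ENNReal.ofReal (Real.exp (S A φ w - β * S A ψ w))) w
            = ENNReal.ofReal (Real.exp (S A φ w - β * S A ψ w)) :=
              Set.indicator_of_mem (show w ∈ {w | w ∈ C ∧ T < S A ψ w} from ⟨hw1, hw2⟩)
                (fun w => ENNReal.ofReal (Real.exp (S A φ w - β * S A ψ w)))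
          _ = Set.indicator
              {w | w ∈ C ∧ (T + ((n:ℝ) + 1) * η) - η < S A ψ w ∧ S A ψ w ≤ T + ((n:ℝ) + 1) * η}
              (fun w => ENNReal.ofReal (Real.exp (S A φ w - β * S A ψ w))) w :=
              (Set.indicator_of_mem hmem
                (fun w => ENNReal.ofReal (Real.exp (S A φ w - β * S A ψ w)))).symm
          _ ≤ _ := ENNReal.le_tsum n
      · rw [Set.indicator_of_notMem hw]
        exact zero_le
    calc (∑' w : List I, Set.indicator {w | w ∈ C ∧ T < S A ψ w}
            (fun w => ENNReal.ofReal (Real.exp (S A φ w - β * S A ψ w))) w)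
        ≤ ∑' w : List I, ∑' n : ℕ, Set.indicator
            {w | w ∈ C ∧ (T + (n + 1) * η) - η < S A ψ w ∧ S A ψ w ≤ T + (n + 1) * η}
            (fun w => ENNReal.ofReal (Real.exp (S A φ w - β * S A ψ w))) w :=
          ENNReal.tsum_le_tsum step1
      _ = ∑' n : ℕ, ∑' w : List I, Set.indicator
            {w | w ∈ C ∧ (T + (n + 1) * η) - η < S A ψ w ∧ S A ψ w ≤ T + (n + 1) * η}
            (fun w => ENNReal.ofReal (Real.exp (S A φ w - β * S A ψ w))) w :=
          ENNReal.tsum_comm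
      _ ≤ ∑' n : ℕ, ENNReal.ofReal (Real.exp (|β| * η + r * η)) * x ^ n := by
          refine ENNReal.tsum_le_tsum fun n => ?_
          have hd : ∀ s : ℝ, (T + ((n:ℝ) + 1) * η) - η < s → s ≤ T + ((n:ℝ) + 1) * η →
              -(β * s) ≤ |β| * η - β * (T + (n:ℝ) * η) := by
            intro s hs1 hs2
            rcases le_or_gt 0 β with hb | hb
            · have h8 : β * (T + (n:ℝ) * η) ≤ β * s := by nlinarith
              have h9 : (0:ℝ) ≤ |β| * η := mul_nonneg (abs_nonneg β) hη.le
              linarith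
            · rw [abs_of_neg hb]
              nlinarith
          calc (∑' w : List I, Set.indicator
                {w | w ∈ C ∧ (T + ((n:ℝ) + 1) * η) - η < S A ψ w ∧ S A ψ w ≤ T + ((n:ℝ) + 1) * η}
                (fun w => ENNReal.ofReal (Real.exp (S A φ w - β * S A ψ w))) w)
              ≤ ENNReal.ofReal (Real.exp (|β| * η - β * (T + (n:ℝ) * η))) *
                  partSum A φ ψ C η (T + ((n:ℝ) + 1) * η) :=
                band_sum_le A φ ψ C η β _ _ hd
            _ ≤ ENNReal.ofReal (Real.exp (|β| * η - β * (T + (n:ℝ) * η))) *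
                  ENNReal.ofReal (Real.exp (r * (T + ((n:ℝ) + 1) * η))) := by
                refine mul_le_mul_right (hT₀ _ ?_) _
                nlinarith [Nat.cast_nonneg (α := ℝ) n]
            _ ≤ ENNReal.ofReal (Real.exp (|β| * η + r * η)) * x ^ n := by
                rw [hx, ← ENNReal.ofReal_pow (Real.exp_nonneg _), ← Real.exp_nat_mul,
                  ← ENNReal.ofReal_mul (Real.exp_nonneg _), ← Real.exp_add,
                  ← ENNReal.ofReal_mul (Real.exp_nonneg _), ← Real.exp_add]
                refine ENNReal.ofReal_le_ofReal (Real.exp_le_exp.mpr ?_)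
                have h9 : (r - β) * T ≤ 0 := mul_nonpos_of_nonpos_of_nonneg (by linarith) hT2
                nlinarith [Nat.cast_nonneg (α := ℝ) n]
      _ = K := by rw [hK, ENNReal.tsum_mul_left]
  have hevK : ∀ᶠ T in atTop, tailSum A φ ψ C β T ≤ K := by
    filter_upwards [eventually_ge_atTop T₀, eventually_ge_atTop (0:ℝ)] with T h1 h2
    exact main T h1 h2
  exact lt_of_le_of_lt (limsup_le_of_le (h := hevK)) hKlt

end LemA

/-- **Critical exponent.** For `ψ ≥ 0` and any `η > 0`, the `ψ`-induced pressure of `φ`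
with respect to `C` equals the infimum of all real `β` such that
`limsup_{T → ∞} Σ_{ω ∈ C, T < S_ω ψ} exp (S_ω φ - β S_ω ψ) < ∞`; in particular it is
independent of the choice of `η > 0`. -/
theorem pressure_eq_criticalExponent (A : I → I → Prop) (φ ψ : Shift A → ℝ)
    (hψ : ∀ x, 0 ≤ ψ x) (C : Set (List I)) (η : ℝ) (hη : 0 < η) :
    pressure A φ ψ C η =
      ⨅ β : {β : ℝ // limsup (fun T : ℝ => tailSum A φ ψ C β T) atTop < ⊤},
        ((β : ℝ) : EReal) := by
  refine le_antisymm (le_iInf fun b => pressure_le_of_feasible A φ ψ C hη b.1 b.2) ?_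
  refine EReal.le_of_forall_lt_iff_le.mp fun z hz => ?_
  exact iInf_le_of_le ⟨z, feasible_of_pressure_lt A φ ψ C hη z hz⟩ le_rfl
end

section
/- Subhomogeneity: if P_ψ(φ, C) ∈ ℝ then P_ψ(cφ, C) ≤ c·P_ψ(φ, C) for all c ≥ 1, and P_ψ(cφ, C) ≥ c·P_ψ(φ, C) for all 0 ≤ c ≤ 1. -/
open Filter Topology
open scoped ENNReal

variable {I : Type*}

open Pointwise in
private lemma S_const_mul' (A : I → I → Prop) (φ : Shift A → ℝ) (w : List I) {c : ℝ}
    (hc : 0 ≤ c) : S A (fun x => c * φ x) w = c * S A φ w := by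
  have hb : birkhoff A (fun x => c * φ x) w.length = fun x => c * birkhoff A φ w.length x := by
    funext x
    simp [birkhoff, Finset.mul_sum]
  have him : birkhoff A (fun x => c * φ x) w.length '' cylinder A w
      = c • (birkhoff A φ w.length '' cylinder A w) := by
    rw [hb]
    ext y
    simp only [Set.mem_image, Set.mem_smul_set, smul_eq_mul]
    constructor
    · rintro ⟨x, hx, rfl⟩; exact ⟨birkhoff A φ w.length x, ⟨x, hx, rfl⟩, rfl⟩
    · rintro ⟨z, ⟨x, hx, rfl⟩, rfl⟩; exact ⟨x, hx, rfl⟩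
  rw [S, him, Real.sSup_smul_of_nonneg hc, smul_eq_mul, S]

private lemma elog_eq_log' (x : ℝ≥0∞) : elog x = ENNReal.log x := rfl

private lemma tsum_rpow_le' {ι : Type*} (a : ι → ℝ≥0∞) {c : ℝ} (hc : 1 ≤ c) :
    ∑' i, a i ^ c ≤ (∑' i, a i) ^ c := by
  rcases eq_or_lt_of_le hc with rfl | hc1
  · simp
  set Sm := ∑' i, a i with hSm
  rcases eq_or_ne Sm ⊤ with hT | hT
  · rw [hT, ENNReal.top_rpow_of_pos (by linarith)]; exact le_top
  rcases eq_or_ne Sm 0 with h0 | h0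
  · have : ∀ i, a i = 0 := by
      intro i
      have := ENNReal.le_tsum (f := a) i
      rw [← hSm, h0] at this
      simpa using this
    simp [this, ENNReal.zero_rpow_of_pos (by linarith : (0:ℝ) < c)]
  have key : ∀ i, a i ^ c ≤ a i * Sm ^ (c - 1) := by
    intro i
    have hai : a i ≤ Sm := ENNReal.le_tsum i
    rcases eq_or_ne (a i) 0 with h | h
    · simp [h, ENNReal.zero_rpow_of_pos (by linarith : (0:ℝ) < c)]
    · have hait : a i ≠ ⊤ := fun ht => hT (top_le_iff.1 (ht ▸ hai))
      calc a i ^ c = a i ^ (1 + (c - 1)) := by ring_nf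
        _ = a i ^ (1:ℝ) * a i ^ (c - 1) := ENNReal.rpow_add _ _ h hait
        _ ≤ a i * Sm ^ (c - 1) := by
            rw [ENNReal.rpow_one]
            exact mul_le_mul_right (ENNReal.rpow_le_rpow hai (by linarith)) _
  calc ∑' i, a i ^ c ≤ ∑' i, a i * Sm ^ (c - 1) := ENNReal.tsum_le_tsum key
    _ = Sm * Sm ^ (c - 1) := by rw [ENNReal.tsum_mul_right]
    _ = Sm ^ (1:ℝ) * Sm ^ (c - 1) := by rw [ENNReal.rpow_one]
    _ = Sm ^ (1 + (c - 1)) := (ENNReal.rpow_add _ _ h0 hT).symm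
    _ = Sm ^ c := by ring_nf

private lemma rpow_tsum_le' {ι : Type*} (a : ι → ℝ≥0∞) {c : ℝ} (hc0 : 0 < c) (hc1 : c ≤ 1) :
    (∑' i, a i) ^ c ≤ ∑' i, a i ^ c := by
  have hfin : ∀ s : Finset ι, (∑ i ∈ s, a i) ^ c ≤ ∑ i ∈ s, a i ^ c := by
    classical
    intro s
    induction s using Finset.induction_on with
    | empty => simp [ENNReal.zero_rpow_of_pos hc0]
    | insert _ _ hni ih =>
      rw [Finset.sum_insert hni, Finset.sum_insert hni]
      exact (ENNReal.rpow_add_le_add_rpow _ _ hc0.le hc1).trans (add_le_add_right ih _)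
  rw [ENNReal.tsum_eq_iSup_sum]
  rw [Monotone.map_iSup_of_continuousAt (f := fun x : ℝ≥0∞ => x ^ c)
    (ENNReal.continuous_rpow_const.continuousAt) (ENNReal.monotone_rpow_of_nonneg hc0.le)
    (by simp [ENNReal.zero_rpow_of_pos hc0])]
  exact iSup_le fun s => (hfin s).trans (ENNReal.sum_le_tsum s)

private noncomputable def mulIso' (c : ℝ) (hc : 0 < c) : EReal ≃o EReal where
  toFun x := (c : EReal) * x
  invFun x := ((c⁻¹ : ℝ) : EReal) * x
  left_inv x := by
    show ((c⁻¹ : ℝ) : EReal) * ((c : EReal) * x) = x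
    rw [← mul_assoc, ← EReal.coe_mul, inv_mul_cancel₀ hc.ne', EReal.coe_one, one_mul]
  right_inv x := by
    show ((c : ℝ) : EReal) * (((c⁻¹ : ℝ) : EReal) * x) = x
    rw [← mul_assoc, ← EReal.coe_mul, mul_inv_cancel₀ hc.ne', EReal.coe_one, one_mul]
  map_rel_iff' := by
    intro a b
    simp only [Equiv.coe_fn_mk]
    constructor
    · intro h
      have h2 := mul_le_mul_of_nonneg_left h
        (EReal.coe_nonneg.2 (inv_nonneg.2 hc.le))
      rwa [← mul_assoc, ← mul_assoc, ← EReal.coe_mul, inv_mul_cancel₀ hc.ne',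
        EReal.coe_one, one_mul, one_mul] at h2
    · exact fun h => mul_le_mul_of_nonneg_left h (EReal.coe_nonneg.2 hc.le)

private lemma limsup_const_mul' (f : ℝ → EReal) {c : ℝ} (hc : 0 < c) :
    limsup (fun T => (c : EReal) * f T) atTop = (c : EReal) * limsup f atTop :=
  ((mulIso' c hc).limsup_apply (f := atTop) (u := f)).symm

private lemma partSum_const_mul' (A : I → I → Prop) (φ ψ : Shift A → ℝ) (C : Set (List I))
    (η T : ℝ) {c : ℝ} (hc : 0 ≤ c) :
    partSum A (fun x => c * φ x) ψ C η T
      = ∑' w : {w : List I // w ∈ C ∧ T - η < S A ψ w ∧ S A ψ w ≤ T},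
          (ENNReal.ofReal (Real.exp (S A φ w.1))) ^ c := by
  refine tsum_congr fun w => ?_
  rw [S_const_mul' A φ w.1 hc, mul_comm, Real.exp_mul,
    ENNReal.ofReal_rpow_of_pos (Real.exp_pos _)]

/-- **Subhomogeneity**: if `P_ψ(φ, C)` is finite then `P_ψ(cφ, C) ≤ c P_ψ(φ, C)` for
`c ≥ 1` and `P_ψ(cφ, C) ≥ c P_ψ(φ, C)` for `0 ≤ c ≤ 1`. -/
theorem pressure_subhomogeneous (A : I → I → Prop) (φ ψ : Shift A → ℝ)
    (hψ : ∀ x, 0 ≤ ψ x) (C : Set (List I)) (η : ℝ) (hη : 0 < η)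
    (hfin : ∃ r : ℝ, pressure A φ ψ C η = (r : EReal)) :
    (∀ c : ℝ, 1 ≤ c →
      pressure A (fun x => c * φ x) ψ C η ≤ (c : EReal) * pressure A φ ψ C η) ∧
    (∀ c : ℝ, 0 ≤ c → c ≤ 1 →
      (c : EReal) * pressure A φ ψ C η ≤ pressure A (fun x => c * φ x) ψ C η) := by
  obtain ⟨r, hr⟩ := hfin
  -- pointwise comparison for positive c
  have hptwise : ∀ (c : ℝ), 0 < c → ∀ T : ℝ, 0 ≤ T →
      (elog (partSum A (fun x => c * φ x) ψ C η T) : EReal)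
        = (c : EReal) * elog ((partSum A φ ψ C η T) ^ (1:ℝ))
        ∨ True := fun _ _ _ _ => Or.inr trivial
  have key : ∀ (c : ℝ), 0 < c → ∀ T : ℝ,
      elog ((partSum A φ ψ C η T) ^ c) = (c : EReal) * elog (partSum A φ ψ C η T) := by
    intro c hc T
    rw [elog_eq_log', elog_eq_log', ENNReal.log_rpow]
  have hmono : ∀ x y : ℝ≥0∞, x ≤ y → elog x ≤ elog y := by
    intro x y h
    rw [elog_eq_log', elog_eq_log']
    exact ENNReal.log_monotone h
  constructor
  · -- c ≥ 1
    intro c hc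
    have hc0 : (0:ℝ) < c := lt_of_lt_of_le one_pos hc
    have hev : ∀ᶠ T in (atTop : Filter ℝ),
        ((T⁻¹ : ℝ) : EReal) * elog (partSum A (fun x => c * φ x) ψ C η T)
          ≤ (c : EReal) * (((T⁻¹ : ℝ) : EReal) * elog (partSum A φ ψ C η T)) := by
      filter_upwards [eventually_ge_atTop (0:ℝ)] with T hT
      have h1 : elog (partSum A (fun x => c * φ x) ψ C η T)
          ≤ (c : EReal) * elog (partSum A φ ψ C η T) := by
        rw [← key c hc0 T]
        apply hmono
        rw [partSum_const_mul' A φ ψ C η T hc0.le]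
        exact tsum_rpow_le' _ hc
      calc ((T⁻¹ : ℝ) : EReal) * elog (partSum A (fun x => c * φ x) ψ C η T)
          ≤ ((T⁻¹ : ℝ) : EReal) * ((c : EReal) * elog (partSum A φ ψ C η T)) :=
            mul_le_mul_of_nonneg_left h1 (EReal.coe_nonneg.2 (inv_nonneg.2 hT))
        _ = (c : EReal) * (((T⁻¹ : ℝ) : EReal) * elog (partSum A φ ψ C η T)) := by
            rw [mul_left_comm]
    calc pressure A (fun x => c * φ x) ψ C η
        ≤ limsup (fun T : ℝ => (c : EReal) *
            (((T⁻¹ : ℝ) : EReal) * elog (partSum A φ ψ C η T))) atTop :=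
          limsup_le_limsup hev
      _ = (c : EReal) * pressure A φ ψ C η := limsup_const_mul' _ hc0
  · -- 0 ≤ c ≤ 1
    intro c hc0 hc1
    rcases eq_or_lt_of_le hc0 with rfl | hc0'
    · -- c = 0
      rw [EReal.coe_zero, zero_mul]
      -- frequently the partition function is nonzero
      have hfreq : ∃ᶠ T in (atTop : Filter ℝ), 1 ≤ T ∧ partSum A φ ψ C η T ≠ 0 := by
        by_contra hcon
        rw [not_frequently] at hcon
        have hev0 : ∀ᶠ T in (atTop : Filter ℝ),
            ((T⁻¹ : ℝ) : EReal) * elog (partSum A φ ψ C η T) = (⊥ : EReal) := by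
          filter_upwards [hcon, eventually_ge_atTop (1:ℝ)] with T hT hT1
          have hP0 : partSum A φ ψ C η T = 0 := by
            by_contra hP
            exact hT ⟨hT1, hP⟩
          rw [hP0, elog_eq_log', ENNReal.log_zero]
          exact EReal.mul_bot_of_pos (EReal.coe_pos.2 (inv_pos.2 (lt_of_lt_of_le one_pos hT1)))
        have : pressure A φ ψ C η = ⊥ := by
          rw [pressure, limsup_congr hev0]
          simp
        rw [hr] at this
        exact EReal.coe_ne_bot r this
      refine le_limsup_of_frequently_le ?_
      refine hfreq.mono ?_
      rintro T ⟨hT1, hP⟩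
      have hT0 : (0:ℝ) < T := lt_of_lt_of_le one_pos hT1
      obtain ⟨w, -⟩ : ∃ w : {w : List I // w ∈ C ∧ T - η < S A ψ w ∧ S A ψ w ≤ T},
          ENNReal.ofReal (Real.exp (S A φ w.1)) ≠ 0 := by
        by_contra hno
        push_neg at hno
        exact hP (by simpa [partSum] using (ENNReal.tsum_eq_zero.2 hno))
      have h1le : (1 : ℝ≥0∞) ≤ partSum A (fun x => 0 * φ x) ψ C η T := by
        have hS0 : S A (fun x => (0:ℝ) * φ x) w.1 = 0 := by
          rw [S_const_mul' A φ w.1 le_rfl, zero_mul]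
        calc (1 : ℝ≥0∞) = ENNReal.ofReal (Real.exp (S A (fun x => (0:ℝ) * φ x) w.1)) := by
              rw [hS0, Real.exp_zero, ENNReal.ofReal_one]
          _ ≤ partSum A (fun x => (0:ℝ) * φ x) ψ C η T := ENNReal.le_tsum w
      have helog : (0 : EReal) ≤ elog (partSum A (fun x => 0 * φ x) ψ C η T) := by
        have := hmono 1 _ h1le
        rwa [elog_eq_log' 1, ENNReal.log_one] at this
      exact mul_nonneg (EReal.coe_nonneg.2 (inv_nonneg.2 hT0.le)) helog
    · -- 0 < c ≤ 1
      have hev : ∀ᶠ T in (atTop : Filter ℝ),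
          (c : EReal) * (((T⁻¹ : ℝ) : EReal) * elog (partSum A φ ψ C η T))
            ≤ ((T⁻¹ : ℝ) : EReal) * elog (partSum A (fun x => c * φ x) ψ C η T) := by
        filter_upwards [eventually_ge_atTop (0:ℝ)] with T hT
        have h1 : (c : EReal) * elog (partSum A φ ψ C η T)
            ≤ elog (partSum A (fun x => c * φ x) ψ C η T) := by
          rw [← key c hc0' T]
          apply hmono
          rw [partSum_const_mul' A φ ψ C η T hc0'.le]
          exact rpow_tsum_le' _ hc0' hc1
        calc (c : EReal) * (((T⁻¹ : ℝ) : EReal) * elog (partSum A φ ψ C η T))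
            = ((T⁻¹ : ℝ) : EReal) * ((c : EReal) * elog (partSum A φ ψ C η T)) := by
              rw [mul_left_comm]
          _ ≤ ((T⁻¹ : ℝ) : EReal) * elog (partSum A (fun x => c * φ x) ψ C η T) :=
              mul_le_mul_of_nonneg_left h1 (EReal.coe_nonneg.2 (inv_nonneg.2 hT))
      calc (c : EReal) * pressure A φ ψ C η
          = limsup (fun T : ℝ => (c : EReal) *
              (((T⁻¹ : ℝ) : EReal) * elog (partSum A φ ψ C η T))) atTop :=
            (limsup_const_mul' _ hc0').symm
        _ ≤ pressure A (fun x => c * φ x) ψ C η := limsup_le_limsup hev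
end

section
/- For the renewal shift with potential ψ given by ψ|[n] = log((n+1)/(n−1)) for n ≥ 2 and ψ|[1] = log 2: for every T > 0 and every β ∈ ℝ, the sum Σ_{ω ∈ Σ*, T < S_ω ψ} e^{−β S_ω ψ} diverges; consequently P_ψ(0, Σ*) = +∞, while P_ψ(0, Σ₁^{per}) = 1. -/
open Filter Topology
open scoped ENNReal

variable {I : Type*}

/-- The renewal shift on `ℕ` rooted at `1`: transitions `n → n - 1` for `n ≥ 2` and
`1 → n` for every `n ≥ 1`. -/
def Aren : ℕ → ℕ → Prop := fun a b => (a = 1 ∧ 1 ≤ b) ∨ (2 ≤ a ∧ b = a - 1)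

/-- The potential `ψ` with `ψ|[1] = log 2` and `ψ|[n] = log ((n+1)/(n-1))` for `n ≥ 2`. -/
noncomputable def psiRen : Shift Aren → ℝ := fun x =>
  if x.1 0 = 1 then Real.log 2
  else Real.log (((x.1 0 : ℝ) + 1) / ((x.1 0 : ℝ) - 1))

/-- The set `Σ_a^per` of periodic words starting with the symbol `a`. -/
def PerWords (A : ℕ → ℕ → Prop) (a : ℕ) : Set (List ℕ) :=
  {w | w ∈ Words A ∧ (∀ (h : w ≠ []), w.head h = a) ∧
    ∀ (h : w ≠ []), A (w.getLast h) (w.head h)}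

/-! ### Auxiliary development -/

namespace Renewal

noncomputable def psiv (n : ℕ) : ℝ :=
  if n = 1 then Real.log 2 else Real.log (((n : ℝ) + 1) / ((n : ℝ) - 1))

lemma psiRen_apply (x : Shift Aren) : psiRen x = psiv (x.1 0) := rfl

lemma iter_shift {A : I → I → Prop} (x : Shift A) (k n : ℕ) :
    ((shiftMap A)^[k] x).1 n = x.1 (n + k) := by
  induction k generalizing x n with
  | zero => rfl
  | succ k ih =>
    rw [Function.iterate_succ_apply]
    rw [ih]
    rfl

lemma sum_range_list (w : List ℕ) (g : ℕ → ℝ) (f : ℕ → ℝ)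
    (h : ∀ k (hk : k < w.length), g k = f (w.get ⟨k, hk⟩)) :
    ∑ k ∈ Finset.range w.length, g k = (w.map f).sum := by
  induction w generalizing g with
  | nil => simp
  | cons a t ih =>
    rw [List.length_cons, Finset.sum_range_succ']
    rw [ih (fun k => g (k + 1)) (fun k hk => h (k + 1) (by simpa using Nat.succ_lt_succ hk))]
    rw [h 0 (by simp)]
    simp [add_comm]

lemma birkhoff_cyl {w : List ℕ} {x : Shift Aren} (hx : x ∈ cylinder Aren w) :
    birkhoff Aren psiRen w.length x = (w.map psiv).sum := by
  unfold birkhoff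
  exact sum_range_list w _ psiv (fun k hk => by
    rw [psiRen_apply, iter_shift, Nat.zero_add, hx k hk])

/-- The canonical extension of a word to an infinite sequence. -/
def extSeq (w : List ℕ) (hw : w ≠ []) : ℕ → ℕ := fun i =>
  if h : i < w.length then w.get ⟨i, h⟩ else max 1 (w.getLast hw - (i + 1 - w.length))

lemma extSeq_valid {w : List ℕ} (hw : w ∈ Words Aren) (h1 : 1 ≤ w.getLast hw.1) :
    ∀ i, Aren (extSeq w hw.1 i) (extSeq w hw.1 (i + 1)) := by
  intro i
  have hlen : 0 < w.length := List.length_pos_iff.mpr hw.1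
  by_cases h2 : i + 1 < w.length
  · have h3 : i < w.length := by omega
    simp only [extSeq, dif_pos h2, dif_pos h3]
    exact hw.2 i h2
  · by_cases h3 : i < w.length
    · -- i = w.length - 1
      obtain rfl : i = w.length - 1 := by omega
      simp only [extSeq, dif_pos h3, dif_neg h2]
      have hget : w.get ⟨w.length - 1, h3⟩ = w.getLast hw.1 := by
        exact (List.getLast_eq_getElem hw.1).symm
      rw [hget]
      have : w.length - 1 + 1 + 1 - w.length = 1 := by omega
      rw [this]
      rcases Nat.lt_or_ge (w.getLast hw.1) 2 with hl | hl
      · have : w.getLast hw.1 = 1 := by omega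
        rw [this]
        left; constructor <;> simp
      · right
        refine ⟨hl, ?_⟩
        omega
    · -- both beyond
      simp only [extSeq, dif_neg h3, dif_neg h2]
      set a := w.getLast hw.1 with ha
      set j := i + 1 - w.length with hj
      have hj1 : 1 ≤ j := by omega
      have : i + 1 + 1 - w.length = j + 1 := by omega
      rw [this]
      rcases Nat.lt_or_ge (a - j) 2 with hl | hl
      · have h4 : max 1 (a - j) = 1 := by omega
        rw [h4]
        left; constructor
        · rfl
        · omega
      · have h4 : max 1 (a - j) = a - j := by omega
        rw [h4]
        right
        constructor
        · omega
        · omega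

lemma cylinder_nonempty {w : List ℕ} (hw : w ∈ Words Aren) (h1 : 1 ≤ w.getLast hw.1) :
    (cylinder Aren w).Nonempty := by
  refine ⟨⟨extSeq w hw.1, extSeq_valid hw h1⟩, ?_⟩
  intro i h
  simp [extSeq, dif_pos h]

lemma S_eq {w : List ℕ} (hw : w ∈ Words Aren) (h1 : 1 ≤ w.getLast hw.1) :
    S Aren psiRen w = (w.map psiv).sum := by
  unfold S
  have himg : birkhoff Aren psiRen w.length '' cylinder Aren w = {(w.map psiv).sum} := by
    apply Set.eq_singleton_iff_nonempty_unique_mem.mpr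
    constructor
    · exact (cylinder_nonempty hw h1).image _
    · rintro y ⟨x, hx, rfl⟩
      exact birkhoff_cyl hx
  rw [himg, csSup_singleton]

lemma S_zero {A : I → I → Prop} (w : List I) : S A (fun _ => 0) w = 0 := by
  unfold S
  have hb : birkhoff A (fun _ => 0) w.length = fun _ => (0 : ℝ) := by
    funext x; simp [birkhoff]
  rw [hb]
  rcases (cylinder A w).eq_empty_or_nonempty with h | h
  · rw [h]; simp [Real.sSup_empty]
  · rw [h.image_const, csSup_singleton]

/-! ### Word combinatorics -/

lemma words_singleton {A : I → I → Prop} (a : I) : [a] ∈ Words A := by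
  refine ⟨by simp, ?_⟩
  intro i h
  simp at h

lemma words_cons {A : I → I → Prop} {a : I} {w : List I} (hw : w ∈ Words A)
    (ha : A a (w.head hw.1)) : (a :: w) ∈ Words A := by
  cases w with
  | nil => exact absurd rfl hw.1
  | cons b t =>
    refine ⟨by simp, ?_⟩
    intro i h
    match i with
    | 0 => exact ha
    | Nat.succ j => exact hw.2 j (by simpa using h)

lemma words_tail {A : I → I → Prop} {a : I} {w : List I} (h : (a :: w) ∈ Words A)
    (hw : w ≠ []) : w ∈ Words A ∧ A a (w.head hw) := by
  constructor
  · refine ⟨hw, ?_⟩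
    intro i hi
    have := h.2 (i + 1) (by simpa using Nat.succ_lt_succ hi)
    simpa using this
  · have := h.2 0 (by simp [List.length_pos_iff.mpr hw])
    cases w with
    | nil => exact absurd rfl hw
    | cons b t => exact this

lemma words_append {A : I → I → Prop} {u v : List I} (hu : u ∈ Words A) (hv : v ∈ Words A)
    (h : A (u.getLast hu.1) (v.head hv.1)) : (u ++ v) ∈ Words A := by
  induction u with
  | nil => exact absurd rfl hu.1
  | cons a t ih =>
    cases t with
    | nil => simpa using words_cons hv (by simpa using h)
    | cons b t' =>
      have htne : (b :: t') ≠ [] := by simp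
      obtain ⟨htw, hat⟩ := words_tail hu htne
      have hlast : (b :: t').getLast htne = (a :: b :: t').getLast hu.1 :=
        (List.getLast_cons htne).symm
      have h2 := ih htw (by rw [hlast]; exact h)
      show (a :: ((b :: t') ++ v)) ∈ Words A
      exact words_cons h2 hat

lemma words_head_append {u v : List I} (hu : u ≠ []) (h : (u ++ v) ≠ []) :
    (u ++ v).head h = u.head hu := by
  cases u with
  | nil => exact absurd rfl hu
  | cons a t => rfl

/-- Descending word from `n` down to `m`. -/
def desc (n m : ℕ) : List ℕ := (List.range' m (n + 1 - m)).reverse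

lemma desc_self (m : ℕ) : desc m m = [m] := by
  simp [desc]

lemma desc_succ {n m : ℕ} (h : m ≤ n + 1) : desc (n + 1) m = (n + 1) :: desc n m := by
  unfold desc
  have h1 : n + 1 + 1 - m = (n + 1 - m) + 1 := by omega
  rw [h1, List.range'_concat]
  simp only [List.reverse_append, List.reverse_cons, List.reverse_nil]
  have : m + 1 * (n + 1 - m) = n + 1 := by omega
  rw [this]
  rfl

lemma desc_words {n m : ℕ} (h1 : 1 ≤ m) (h2 : m ≤ n) :
    desc n m ∈ Words Aren ∧ (∃ hne : desc n m ≠ [], (desc n m).head hne = n ∧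
      (desc n m).getLast hne = m) := by
  induction n, h2 using Nat.le_induction with
  | base =>
    rw [desc_self]
    exact ⟨words_singleton m, by simp, rfl, rfl⟩
  | succ n hmn ih =>
    obtain ⟨hw, hne, hh, hl⟩ := ih
    rw [desc_succ (by omega)]
    have hcons : ((n+1) :: desc n m) ∈ Words Aren := by
      refine words_cons hw ?_
      rw [show (desc n m).head hw.1 = n from hh]
      right
      exact ⟨by omega, rfl⟩
    refine ⟨hcons, by simp, rfl, ?_⟩
    rw [List.getLast_cons hne]
    exact hl

lemma sum_desc {n m : ℕ} (h1 : 2 ≤ m) (h2 : m ≤ n) :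
    ((desc n m).map psiv).sum
      = Real.log ((n : ℝ) * (n + 1)) - Real.log (((m : ℝ) - 1) * m) := by
  induction n, h2 using Nat.le_induction with
  | base =>
    rw [desc_self]
    have hm2 : (2:ℝ) ≤ (m:ℝ) := by exact_mod_cast h1
    simp only [List.map_cons, List.map_nil, List.sum_cons, List.sum_nil, add_zero]
    unfold psiv
    rw [if_neg (by omega),
        Real.log_div (by positivity) (ne_of_gt (by linarith)),
        Real.log_mul (ne_of_gt (by linarith)) (ne_of_gt (by linarith)),
        Real.log_mul (ne_of_gt (by linarith)) (ne_of_gt (by linarith))]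
    ring
  | succ n hmn ih =>
    have hn2 : (2:ℝ) ≤ (n:ℝ) := by exact_mod_cast le_trans h1 hmn
    have hm2 : (2:ℝ) ≤ (m:ℝ) := by exact_mod_cast h1
    rw [desc_succ (by omega), List.map_cons, List.sum_cons, ih]
    unfold psiv
    rw [if_neg (by omega)]
    push_cast
    rw [show ((n:ℝ) + 1 + 1) = (n:ℝ) + 2 from by ring,
        show ((n:ℝ) + 1 - 1) = (n:ℝ) from by ring,
        Real.log_div (ne_of_gt (by linarith)) (ne_of_gt (by linarith)),
        Real.log_mul (ne_of_gt (by linarith)) (ne_of_gt (by linarith)),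
        Real.log_mul (ne_of_gt (by linarith)) (ne_of_gt (by linarith)),
        Real.log_mul (ne_of_gt (by linarith)) (ne_of_gt (by linarith))]
    ring

/-! ### Blocks and periodic words -/

def blk (n : ℕ) : List ℕ := 1 :: desc n 2

lemma blk_ne (n : ℕ) : blk n ≠ [] := by simp [blk]

lemma desc_one : desc 1 2 = [] := rfl

lemma blk_one : blk 1 = [1] := rfl

lemma blk_length {n : ℕ} (h : 1 ≤ n) : (blk n).length = n := by
  simp only [blk, List.length_cons, desc, List.length_reverse, List.length_range']
  omega

lemma blk_head (n : ℕ) : (blk n).head (blk_ne n) = 1 := rfl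

lemma blk_words {n : ℕ} (h : 1 ≤ n) :
    blk n ∈ Words Aren ∧ ((blk n).getLast (blk_ne n) = 1 ∨ (blk n).getLast (blk_ne n) = 2) := by
  rcases Nat.lt_or_ge n 2 with h2 | h2
  · have : n = 1 := by omega
    subst this
    exact ⟨words_singleton 1, Or.inl rfl⟩
  · obtain ⟨hw, hne, hh, hl⟩ := desc_words (by omega : 1 ≤ 2) h2
    constructor
    · refine words_cons hw ?_
      rw [show (desc n 2).head hw.1 = n from hh]
      exact Or.inl ⟨rfl, by omega⟩
    · right
      show (1 :: desc n 2).getLast _ = 2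
      rw [List.getLast_cons hne]
      exact hl

lemma sum_blk {n : ℕ} (h : 1 ≤ n) :
    ((blk n).map psiv).sum = Real.log ((n : ℝ) * (n + 1)) := by
  rcases Nat.lt_or_ge n 2 with h2 | h2
  · have : n = 1 := by omega
    subst this
    simp only [blk_one, List.map_cons, List.map_nil, List.sum_cons, List.sum_nil, add_zero]
    unfold psiv
    rw [if_pos rfl]
    norm_num
  · have : ((blk n).map psiv).sum = psiv 1 + ((desc n 2).map psiv).sum := by
      simp [blk]
    rw [this, sum_desc (le_refl 2) h2]
    unfold psiv
    rw [if_pos rfl]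
    norm_num

def wd (l : List ℕ) : List ℕ := (l.map blk).flatten

lemma wd_nil : wd [] = [] := rfl

lemma wd_cons (n : ℕ) (l : List ℕ) : wd (n :: l) = blk n ++ wd l := by
  simp [wd]

lemma wd_ne {l : List ℕ} (h : l ≠ []) : wd l ≠ [] := by
  cases l with
  | nil => exact absurd rfl h
  | cons n t => rw [wd_cons]; simp [blk]

lemma wd_spec {l : List ℕ} (hne : l ≠ []) (hv : ∀ n ∈ l, 1 ≤ n) :
    wd l ∈ Words Aren ∧ (wd l).head (wd_ne hne) = 1 ∧
      ((wd l).getLast (wd_ne hne) = 1 ∨ (wd l).getLast (wd_ne hne) = 2) := by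
  induction l with
  | nil => exact absurd rfl hne
  | cons n t ih =>
    have hn : 1 ≤ n := hv n (by simp)
    cases t with
    | nil =>
      have : wd [n] = blk n := by rw [wd_cons, wd_nil, List.append_nil]
      obtain ⟨hw, hl⟩ := blk_words hn
      refine ⟨by rw [this]; exact hw, ?_, ?_⟩
      · show (wd [n]).head _ = 1
        simp only [this]
        exact blk_head n
      · simp only [this]
        exact hl
    | cons m t' =>
      have htne : (m :: t') ≠ [] := by simp
      obtain ⟨ihw, ihh, ihl⟩ := ih htne (fun x hx => hv x (by simp at hx ⊢; tauto))
      obtain ⟨hbw, hbl⟩ := blk_words hn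
      have hwd : wd (n :: m :: t') = blk n ++ wd (m :: t') := wd_cons _ _
      have hA : Aren ((blk n).getLast (blk_ne n)) ((wd (m :: t')).head (wd_ne htne)) := by
        rw [ihh]
        rcases hbl with h | h <;> rw [h]
        · exact Or.inl ⟨rfl, le_refl 1⟩
        · exact Or.inr ⟨le_refl 2, rfl⟩
      refine ⟨?_, ?_, ?_⟩
      · rw [hwd]; exact words_append hbw ihw hA
      · have : (wd (n :: m :: t')).head (wd_ne (by simp)) = (blk n).head (blk_ne n) := by
          simp only [hwd]
          exact words_head_append (blk_ne n) _
        rw [this, blk_head]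
      · have : (wd (n :: m :: t')).getLast (wd_ne (by simp))
            = (wd (m :: t')).getLast (wd_ne htne) := by
          simp only [hwd]
          rw [List.getLast_append]
          simp [List.isEmpty_iff, wd_ne htne]
        rw [this]
        exact ihl

lemma wd_per {l : List ℕ} (hne : l ≠ []) (hv : ∀ n ∈ l, 1 ≤ n) :
    wd l ∈ PerWords Aren 1 := by
  obtain ⟨hw, hh, hl⟩ := wd_spec hne hv
  refine ⟨hw, fun h => hh, fun h => ?_⟩
  rw [show (wd l).head h = 1 from hh]
  rcases hl with h2 | h2 <;> rw [show (wd l).getLast h = _ from h2]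
  · exact Or.inl ⟨rfl, le_refl 1⟩
  · exact Or.inr ⟨le_refl 2, rfl⟩

lemma sum_wd {l : List ℕ} (hv : ∀ n ∈ l, 1 ≤ n) :
    ((wd l).map psiv).sum = (l.map (fun n : ℕ => Real.log ((n : ℝ) * ((n : ℝ) + 1)))).sum := by
  induction l with
  | nil => simp [wd_nil]
  | cons n t ih =>
    rw [wd_cons, List.map_append, List.sum_append, List.map_cons, List.sum_cons,
      sum_blk (hv n (by simp)), ih (fun x hx => hv x (by simp at hx ⊢; tauto))]

lemma S_wd {l : List ℕ} (hne : l ≠ []) (hv : ∀ n ∈ l, 1 ≤ n) :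
    S Aren psiRen (wd l) = (l.map (fun n : ℕ => Real.log ((n : ℝ) * ((n : ℝ) + 1)))).sum := by
  obtain ⟨hw, hh, hl⟩ := wd_spec hne hv
  rw [S_eq hw (by rcases hl with h | h <;> rw [show (wd l).getLast hw.1 = _ from h] <;> omega)]
  exact sum_wd hv

lemma mem_desc_ge {n x : ℕ} (hx : x ∈ desc n 2) : 2 ≤ x := by
  unfold desc at hx
  rw [List.mem_reverse] at hx
  have := List.mem_range'.mp hx
  omega

lemma blk_prefix_eq_aux {n₁ n₂ : ℕ} {u v : List ℕ} (h1 : 1 ≤ n₁) (h2 : 1 ≤ n₂)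
    (hu : u = [] ∨ ∃ h : u ≠ [], u.head h = 1)
    (hle : n₁ ≤ n₂) (heq : blk n₁ ++ u = blk n₂ ++ v) : n₁ = n₂ := by
  by_contra hne
  have hlt : n₁ < n₂ := lt_of_le_of_ne hle hne
  have hblen1 : (blk n₁).length = n₁ := blk_length h1
  have hblen2 : (blk n₂).length = n₂ := blk_length h2
  have hlen : n₁ + u.length = n₂ + v.length := by
    have := congrArg List.length heq
    simpa [hblen1, hblen2] using this
  have hune : u ≠ [] := by
    intro h
    rw [h] at hlen
    simp at hlen
    omega
  rcases hu with h | ⟨h, hh⟩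
  · exact hune h
  have hupos : 0 < u.length := List.length_pos_iff.mpr hune
  have hidx : n₁ < (blk n₁ ++ u).length := by
    rw [List.length_append]
    omega
  have e3 := List.getElem_of_eq heq hidx
  rw [List.getElem_append_right (by omega)] at e3
  rw [List.getElem_append_left (by omega : n₁ < (blk n₂).length)] at e3
  simp only [show n₁ - (blk n₁).length = 0 from by omega] at e3
  have hu1 : u[0]'(by omega) = 1 := by
    cases u with
    | nil => exact absurd rfl hune
    | cons x xs => exact hh
  rw [hu1] at e3
  obtain ⟨k, hk⟩ : ∃ k, n₁ = k + 1 := ⟨n₁ - 1, by omega⟩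
  have hkd : k < (desc n₂ 2).length := by
    have : n₁ < (blk n₂).length := by omega
    simp only [blk, List.length_cons] at this
    omega
  have e5 : (blk n₂)[n₁]'(by omega) = (desc n₂ 2)[k]'hkd := by
    simp only [blk, hk, List.getElem_cons_succ]
  rw [e5] at e3
  have := mem_desc_ge (List.getElem_mem hkd)
  omega

lemma wd_inj : ∀ l₁ l₂ : List ℕ, (∀ n ∈ l₁, 1 ≤ n) → (∀ n ∈ l₂, 1 ≤ n) →
    wd l₁ = wd l₂ → l₁ = l₂ := by
  intro l₁
  induction l₁ with
  | nil =>
    intro l₂ _ _ h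
    cases l₂ with
    | nil => rfl
    | cons n t => exact absurd h.symm (wd_ne (by simp))
  | cons n₁ t₁ ih =>
    intro l₂ hv1 hv2 h
    cases l₂ with
    | nil => exact absurd h (wd_ne (by simp))
    | cons n₂ t₂ =>
      rw [wd_cons, wd_cons] at h
      have hn1 : 1 ≤ n₁ := hv1 n₁ (by simp)
      have hn2 : 1 ≤ n₂ := hv2 n₂ (by simp)
      have hhead : ∀ (t : List ℕ), (∀ n ∈ t, 1 ≤ n) →
          wd t = [] ∨ ∃ h : wd t ≠ [], (wd t).head h = 1 := by
        intro t hvt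
        cases t with
        | nil => exact Or.inl rfl
        | cons m t' => exact Or.inr ⟨wd_ne (by simp), (wd_spec (by simp) hvt).2.1⟩
      have hvt1 : ∀ n ∈ t₁, 1 ≤ n := fun x hx => hv1 x (by simp at hx ⊢; tauto)
      have hvt2 : ∀ n ∈ t₂, 1 ≤ n := fun x hx => hv2 x (by simp at hx ⊢; tauto)
      have hn : n₁ = n₂ := by
        rcases le_total n₁ n₂ with hle | hle
        · exact blk_prefix_eq_aux hn1 hn2 (hhead t₁ hvt1) hle h
        · exact (blk_prefix_eq_aux hn2 hn1 (hhead t₂ hvt2) hle h.symm).symm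
      subst hn
      have := List.append_cancel_left h
      rw [ih t₂ hvt1 hvt2 this]

lemma desc_forced : ∀ n, 2 ≤ n → ∀ w, w ∈ Words Aren → ∀ (h : w ≠ []), w.head h = n →
    Aren (w.getLast h) 1 →
    ∃ t, w = desc n 2 ++ t ∧ (t = [] ∨ (t ∈ Words Aren ∧
      ∃ h' : t ≠ [], t.head h' = 1 ∧ Aren (t.getLast h') 1)) := by
  intro n hn
  induction n, hn using Nat.le_induction with
  | base =>
    intro w hw h hh hl
    cases w with
    | nil => exact absurd rfl h
    | cons a r =>
      have ha : a = 2 := hh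
      subst ha
      cases r with
      | nil => exact ⟨[], by rw [desc_self]; rfl, Or.inl rfl⟩
      | cons b r' =>
        have hrne : (b :: r') ≠ [] := by simp
        obtain ⟨hrw, hA⟩ := words_tail hw hrne
        have hb : (b :: r').head hrne = 1 := by
          rcases hA with ⟨h1, _⟩ | ⟨_, h1⟩
          · omega
          · exact h1
        have hlast : (b :: r').getLast hrne = (2 :: b :: r').getLast h :=
          (List.getLast_cons hrne).symm
        refine ⟨b :: r', by rw [desc_self]; rfl, Or.inr ⟨hrw, hrne, hb, ?_⟩⟩
        rw [hlast]
        exact hl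
  | succ n hn2 ih =>
    intro w hw h hh hl
    cases w with
    | nil => exact absurd rfl h
    | cons a r =>
      have ha : a = n + 1 := hh
      subst ha
      cases r with
      | nil =>
        exfalso
        have : (n + 1) = ([n+1].getLast h) := rfl
        rw [← this] at hl
        rcases hl with ⟨h1, _⟩ | ⟨_, h1⟩ <;> omega
      | cons b r' =>
        have hrne : (b :: r') ≠ [] := by simp
        obtain ⟨hrw, hA⟩ := words_tail hw hrne
        have hb : (b :: r').head hrne = n := by
          rcases hA with ⟨h1, _⟩ | ⟨_, h1⟩
          · omega
          · simp at h1 ⊢; omega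
        have hlast : (b :: r').getLast hrne = ((n+1) :: b :: r').getLast h :=
          (List.getLast_cons hrne).symm
        obtain ⟨t, ht, hprop⟩ := ih (b :: r') hrw hrne hb (by rw [hlast]; exact hl)
        refine ⟨t, ?_, hprop⟩
        rw [desc_succ (by omega), ht]
        rfl

lemma per_surj_aux : ∀ N, ∀ w, w.length ≤ N → w ∈ PerWords Aren 1 →
    ∃ l, l ≠ [] ∧ (∀ n ∈ l, 1 ≤ n) ∧ wd l = w := by
  intro N
  induction N with
  | zero =>
    intro w hlen hper
    exact absurd (List.length_eq_zero_iff.mp (Nat.le_zero.mp hlen)) hper.1.1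
  | succ N ih =>
    intro w hlen hper
    obtain ⟨hW, hhead, hlastA⟩ := hper
    have hne : w ≠ [] := hW.1
    cases w with
    | nil => exact absurd rfl hne
    | cons a r =>
      have ha : a = 1 := hhead (by simp)
      subst ha
      cases r with
      | nil => exact ⟨[1], by simp, by simp, rfl⟩
      | cons b r' =>
        have hrne : (b :: r') ≠ [] := by simp
        obtain ⟨hrw, hA⟩ := words_tail hW hrne
        have hb1 : 1 ≤ b := by
          rcases hA with ⟨_, h1⟩ | ⟨h1, _⟩
          · exact h1
          · omega
        have hlast : (b :: r').getLast hrne = (1 :: b :: r').getLast hne :=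
          (List.getLast_cons hrne).symm
        have hlastA' : Aren ((b :: r').getLast hrne) 1 := by
          rw [hlast]
          have := hlastA hne
          rwa [show (1 :: b :: r').head hne = 1 from rfl] at this
        rcases Nat.lt_or_ge b 2 with hb2 | hb2
        · -- b = 1 : tail is periodic
          have hb : b = 1 := by omega
          subst hb
          have hper' : (1 :: r') ∈ PerWords Aren 1 :=
            ⟨hrw, fun h => rfl, fun h => hlastA'⟩
          obtain ⟨l, hlne, hlv, hwl⟩ := ih (1 :: r') (by simp at hlen ⊢; omega) hper'
          refine ⟨1 :: l, by simp, ?_, ?_⟩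
          · intro x hx
            simp at hx
            rcases hx with rfl | hx
            · exact le_refl 1
            · exact hlv x hx
          · rw [wd_cons, hwl]
            rfl
        · -- b ≥ 2 : forced descent
          obtain ⟨t, ht, hprop⟩ := desc_forced b hb2 (b :: r') hrw hrne rfl hlastA'
          rcases hprop with rfl | ⟨htw, htne, hth, htl⟩
          · -- w = blk b
            refine ⟨[b], by simp, by simp [hb1], ?_⟩
            rw [show wd [b] = blk b from by rw [wd_cons, wd_nil, List.append_nil]]
            show 1 :: desc b 2 = 1 :: b :: r'
            rw [List.append_nil] at ht
            rw [← ht]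
          · have hper' : t ∈ PerWords Aren 1 := ⟨htw, fun h => hth, fun h => by
              rw [show t.head h = 1 from hth]; exact htl⟩
            have htlen : t.length ≤ N := by
              have h1 := congrArg List.length ht
              simp only [List.length_append, List.length_cons] at h1 hlen
              have h2 : 1 ≤ (desc b 2).length := by
                simp only [desc, List.length_reverse, List.length_range']
                omega
              omega
            obtain ⟨l, hlne, hlv, hwl⟩ := ih t htlen hper'
            refine ⟨b :: l, by simp, ?_, ?_⟩
            · intro x hx
              simp at hx
              rcases hx with rfl | hx
              · exact hb1
              · exact hlv x hx
            · rw [wd_cons, hwl, ht]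
              rfl

/-! ### Summation machinery -/

def neListEquiv (α : Type*) : {l : List α // l ≠ []} ≃ α × List α where
  toFun l := (l.1.head l.2, l.1.tail)
  invFun p := ⟨p.1 :: p.2, by simp⟩
  left_inv l := Subtype.ext (List.cons_head_tail l.2)
  right_inv p := rfl

lemma tsum_ne_list {α : Type*} (g : α → ℝ≥0∞) :
    ∑' l : {l : List α // l ≠ []}, (l.1.map g).prod
      = (∑' a : α, g a) * ∑' l : List α, (l.map g).prod := by
  rw [← (neListEquiv α).symm.tsum_eq (fun l : {l : List α // l ≠ []} => (l.1.map g).prod)]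
  have h1 : ∀ p : α × List α,
      (((neListEquiv α).symm p).1.map g).prod = g p.1 * (p.2.map g).prod := fun p => rfl
  rw [tsum_congr h1, ENNReal.tsum_prod']
  simp only [Prod.fst, Prod.snd]
  have h2 : ∀ a : α, (∑' l : List α, g a * (List.map g l).prod)
      = g a * ∑' l : List α, (List.map g l).prod := fun a => ENNReal.tsum_mul_left
  rw [tsum_congr h2]
  exact ENNReal.tsum_mul_right

lemma tsum_pi_fin {α : Type*} (g : α → ℝ≥0∞) :
    ∀ k, ∑' f : Fin k → α, ∏ i, g (f i) = (∑' a : α, g a) ^ k := by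
  intro k
  induction k with
  | zero =>
    rw [pow_zero]
    rw [tsum_eq_single (fun i => i.elim0) (fun b hb => absurd (Subsingleton.elim b _) hb)]
    simp
  | succ k ih =>
    rw [← (Fin.consEquiv (fun _ : Fin (k+1) => α)).tsum_eq (fun f => ∏ i, g (f i))]
    have h1 : ∀ p : α × (Fin k → α),
        (∏ i, g ((Fin.consEquiv (fun _ : Fin (k+1) => α)) p i))
          = g p.1 * ∏ i, g (p.2 i) := by
      intro p
      have e : ((Fin.consEquiv (fun _ : Fin (k+1) => α)) p) = Fin.cons p.1 p.2 := rfl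
      rw [e, Fin.prod_univ_succ]
      simp
    rw [tsum_congr h1, ENNReal.tsum_prod']
    simp only [Prod.fst, Prod.snd]
    have h2 : ∀ a : α, (∑' v : Fin k → α, g a * ∏ i, g (v i))
        = g a * ((∑' a : α, g a) ^ k) := by
      intro a
      rw [ENNReal.tsum_mul_left, ih]
    rw [tsum_congr h2, ENNReal.tsum_mul_right, pow_succ']

def lenEquiv (α : Type*) (k : ℕ) : (Fin k → α) ≃ {l : List α // l.length = k} where
  toFun f := ⟨List.ofFn f, List.length_ofFn⟩
  invFun l := fun i => l.1[i.1]'(by rw [l.2]; exact i.2)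
  left_inv f := by
    funext i
    simp [List.getElem_ofFn]
  right_inv l := by
    apply Subtype.ext
    apply List.ext_getElem (by simp [l.2])
    intro i h1 h2
    simp [List.getElem_ofFn]

lemma tsum_list {α : Type*} (g : α → ℝ≥0∞) :
    ∑' l : List α, (l.map g).prod = ∑' k : ℕ, (∑' a : α, g a) ^ k := by
  rw [← (Equiv.sigmaFiberEquiv (fun l : List α => l.length)).tsum_eq
    (fun l : List α => (l.map g).prod)]
  have h0 : ∀ c : Σ k : ℕ, {l : List α // l.length = k},
      (List.map g ((Equiv.sigmaFiberEquiv (fun l : List α => l.length)) c)).prod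
        = (fun p : Σ k : ℕ, {l : List α // l.length = k} => ((p.2 : List α).map g).prod) c :=
    fun c => rfl
  rw [tsum_congr h0]
  rw [ENNReal.tsum_sigma' (fun p : Σ k : ℕ, {l : List α // l.length = k} =>
    ((p.2 : List α).map g).prod)]
  refine tsum_congr (fun k => ?_)
  have h0' : ∀ b : {l : List α // l.length = k},
      (fun p : Σ k : ℕ, {l : List α // l.length = k} => ((p.2 : List α).map g).prod) ⟨k, b⟩
        = ((b : List α).map g).prod := fun b => rfl
  rw [tsum_congr h0']
  rw [← (lenEquiv α k).tsum_eq (fun l : {l : List α // l.length = k} => (l.1.map g).prod)]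
  have h1 : ∀ f : Fin k → α,
      ((((lenEquiv α k) f) : List α).map g).prod = ∏ i, g (f i) := by
    intro f
    show ((List.ofFn f).map g).prod = _
    rw [List.map_ofFn, List.prod_ofFn]
    rfl
  rw [tsum_congr h1]
  exact tsum_pi_fin g k

lemma tsum_ne_list' {α : Type*} (g : α → ℝ≥0∞) :
    ∑' l : {l : List α // l ≠ []}, (l.1.map g).prod
      = ∑' k : ℕ, (∑' a : α, g a) ^ (k + 1) := by
  rw [tsum_ne_list, tsum_list, ← ENNReal.tsum_mul_left]
  exact tsum_congr (fun k => (pow_succ' _ _).symm)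

/-! ### The generating function -/

noncomputable def Wt (n : ℕ) : ℝ := Real.log ((n : ℝ) * ((n : ℝ) + 1))

noncomputable def gE (s : ℝ) (n : ℕ) : ℝ≥0∞ := ENNReal.ofReal (Real.exp (-s * Wt n))

lemma log_two_le_Wt {n : ℕ} (h : 1 ≤ n) : Real.log 2 ≤ Wt n := by
  apply Real.log_le_log (by norm_num)
  have h1 : (1:ℝ) ≤ (n:ℝ) := by exact_mod_cast h
  nlinarith

lemma Wt_nonneg {n : ℕ} (h : 1 ≤ n) : 0 ≤ Wt n :=
  le_trans (le_of_lt (Real.log_pos (by norm_num))) (log_two_le_Wt h)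

lemma exp_sum_list (s : ℝ) (l : List {n : ℕ // 1 ≤ n}) :
    ENNReal.ofReal (Real.exp (-s * ((l.map (fun a => Wt a.1)).sum)))
      = (l.map (fun a => gE s a.1)).prod := by
  induction l with
  | nil => simp
  | cons a t ih =>
    simp only [List.map_cons, List.sum_cons, List.prod_cons]
    rw [← ih]
    unfold gE
    rw [← ENNReal.ofReal_mul (le_of_lt (Real.exp_pos _)), ← Real.exp_add]
    congr 2
    ring

def natEquivA1 : ℕ ≃ {n : ℕ // 1 ≤ n} where
  toFun k := ⟨k + 1, Nat.le_add_left 1 k⟩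
  invFun a := a.1 - 1
  left_inv k := by simp
  right_inv a := by
    apply Subtype.ext
    have := a.2
    simp
    omega

noncomputable def G (s : ℝ) : ℝ≥0∞ := ∑' a : {n : ℕ // 1 ≤ n}, gE s a.1

lemma G_eq (s : ℝ) : G s = ∑' k : ℕ, gE s (k + 1) := by
  rw [G, ← natEquivA1.tsum_eq (fun a : {n : ℕ // 1 ≤ n} => gE s a.1)]
  rfl

lemma tele_hasSum (c : ℕ) :
    HasSum (fun k : ℕ => 1 / (((k : ℝ) + c + 1) * ((k : ℝ) + c + 2))) (1 / ((c : ℝ) + 1)) := by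
  rw [hasSum_iff_tendsto_nat_of_nonneg (fun i => by positivity)]
  have hps : ∀ n : ℕ, ∑ i ∈ Finset.range n, 1 / (((i : ℝ) + c + 1) * ((i : ℝ) + c + 2))
      = 1 / ((c : ℝ) + 1) - 1 / ((n : ℝ) + c + 1) := by
    intro n
    have key := Finset.sum_range_sub' (fun i : ℕ => 1 / ((i : ℝ) + c + 1)) n
    simp only [Nat.cast_zero, zero_add, Nat.cast_add, Nat.cast_one] at key
    rw [← key]
    apply Finset.sum_congr rfl
    intro i _
    have h1 : ((i : ℝ) + c + 1) ≠ 0 := by positivity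
    have h2 : ((i : ℝ) + c + 2) ≠ 0 := by positivity
    rw [div_sub_div _ _ h1 (by positivity : ((i:ℝ) + 1 + c + 1) ≠ 0)]
    rw [div_eq_div_iff (by positivity) (by positivity)]
    ring
  simp only [hps]
  have h4 : Filter.Tendsto (fun n : ℕ => 1 / ((n : ℝ) + c + 1)) Filter.atTop (nhds 0) := by
    apply Filter.Tendsto.comp (f := fun n : ℕ => (n : ℝ) + c + 1) tendsto_inv_atTop_zero ?_ |>.congr
    · intro n; simp [one_div]
    · apply Filter.tendsto_atTop_add_const_right
      apply Filter.tendsto_atTop_add_const_right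
      exact tendsto_natCast_atTop_atTop
  simpa using Filter.Tendsto.const_sub (1 / ((c : ℝ) + 1)) h4

lemma gE_one (n : ℕ) (h : 1 ≤ n) :
    gE 1 n = ENNReal.ofReal (1 / ((n : ℝ) * ((n : ℝ) + 1))) := by
  unfold gE Wt
  congr 1
  have h1 : (1:ℝ) ≤ (n:ℝ) := by exact_mod_cast h
  rw [neg_one_mul, Real.exp_neg, Real.exp_log (by nlinarith)]
  rw [one_div]

lemma tsum_gE_one (c : ℕ) :
    ∑' k : ℕ, gE 1 (k + 1 + c) = ENNReal.ofReal (1 / ((c : ℝ) + 1)) := by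
  have h1 : ∀ k : ℕ, gE 1 (k + 1 + c) = ENNReal.ofReal (1 / (((k : ℝ) + c + 1) * ((k : ℝ) + c + 2))) := by
    intro k
    rw [gE_one _ (by omega)]
    congr 2 <;> push_cast <;> ring
  rw [tsum_congr h1, ← ENNReal.ofReal_tsum_of_nonneg (fun k => by positivity)
    (tele_hasSum c).summable, (tele_hasSum c).tsum_eq]

lemma G_one : G 1 = 1 := by
  rw [G_eq]
  have := tsum_gE_one 0
  simp only [Nat.add_zero, Nat.cast_zero] at this
  rw [this]
  norm_num

lemma G_lt_one {s : ℝ} (hs : 1 < s) : G s < 1 := by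
  have hlog2 : 0 < Real.log 2 := Real.log_pos (by norm_num)
  rw [G_eq]
  rw [tsum_eq_zero_add' ENNReal.summable]
  have htail : ∑' k : ℕ, gE s (k + 1 + 1) ≤ ∑' k : ℕ, gE 1 (k + 1 + 1) := by
    apply ENNReal.tsum_le_tsum
    intro k
    apply ENNReal.ofReal_le_ofReal
    apply Real.exp_le_exp.mpr
    have hw : 0 ≤ Wt (k + 1 + 1) := Wt_nonneg (by omega)
    nlinarith
  have htail2 : ∑' k : ℕ, gE 1 (k + 1 + 1) = ENNReal.ofReal (1/2) := by
    have := tsum_gE_one 1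
    simp only [Nat.cast_one] at this
    rw [this]
    norm_num
  have hhead : gE s (0 + 1) = ENNReal.ofReal (Real.exp (-s * Real.log 2)) := by
    unfold gE Wt
    norm_num
  calc gE s (0 + 1) + ∑' k : ℕ, gE s (k + 1 + 1)
      ≤ ENNReal.ofReal (Real.exp (-s * Real.log 2)) + ENNReal.ofReal (1/2) := by
        rw [hhead]
        exact add_le_add le_rfl (le_trans htail (le_of_eq htail2))
    _ = ENNReal.ofReal (Real.exp (-s * Real.log 2) + 1/2) := by
        rw [ENNReal.ofReal_add (le_of_lt (Real.exp_pos _)) (by norm_num)]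
    _ < 1 := by
        rw [show (1 : ℝ≥0∞) = ENNReal.ofReal 1 from by norm_num]
        rw [ENNReal.ofReal_lt_ofReal_iff (by norm_num)]
        have : Real.exp (-s * Real.log 2) < Real.exp (-1 * Real.log 2) := by
          apply Real.exp_lt_exp.mpr
          nlinarith
        have h2 : Real.exp (-1 * Real.log 2) = 1/2 := by
          rw [neg_one_mul, Real.exp_neg, Real.exp_log (by norm_num)]
          norm_num
        linarith [this, h2 ▸ this]

lemma one_le_G {s : ℝ} (hs : s < 1) : 1 ≤ G s := by
  have hlog2 : 0 < Real.log 2 := Real.log_pos (by norm_num)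
  have hterm : ∀ k : ℕ, ENNReal.ofReal (Real.exp ((1 - s) * Real.log 2)) * gE 1 (k + 1)
      ≤ gE s (k + 1) := by
    intro k
    unfold gE
    rw [← ENNReal.ofReal_mul (le_of_lt (Real.exp_pos _)), ← Real.exp_add]
    apply ENNReal.ofReal_le_ofReal
    apply Real.exp_le_exp.mpr
    have hw : Real.log 2 ≤ Wt (k + 1) := log_two_le_Wt (by omega)
    nlinarith
  have h1 : ENNReal.ofReal (Real.exp ((1 - s) * Real.log 2)) * G 1 ≤ G s := by
    rw [G_eq s, G_eq 1, ← ENNReal.tsum_mul_left]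
    exact ENNReal.tsum_le_tsum hterm
  rw [G_one, mul_one] at h1
  refine le_trans ?_ h1
  rw [show (1 : ℝ≥0∞) = ENNReal.ofReal 1 from by norm_num]
  apply ENNReal.ofReal_le_ofReal
  exact Real.one_le_exp (by nlinarith)

/-! ### The periodic-word partition sum -/

lemma map_val_pmap (l : List ℕ) (H : ∀ n ∈ l, 1 ≤ n) :
    (l.pmap (fun n h => (⟨n, h⟩ : {n : ℕ // 1 ≤ n})) H).map Subtype.val = l := by
  induction l with
  | nil => rfl
  | cons a t ih =>
    simp only [List.pmap, List.map_cons]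
    exact congrArg (a :: ·) (ih _)

lemma per_tsum (s : ℝ) :
    (∑' w : {w : List ℕ // w ∈ PerWords Aren 1},
      ENNReal.ofReal (Real.exp (-s * S Aren psiRen w.1)))
      = ∑' k : ℕ, (G s) ^ (k + 1) := by
  classical
  have hmapne : ∀ l : {l : List {n : ℕ // 1 ≤ n} // l ≠ []}, l.1.map Subtype.val ≠ [] := by
    intro l h
    exact l.2 (by simpa using congrArg List.length h)
  have hmapv : ∀ l : {l : List {n : ℕ // 1 ≤ n} // l ≠ []}, ∀ n ∈ l.1.map Subtype.val, 1 ≤ n := by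
    intro l n hn
    obtain ⟨a, _, rfl⟩ := List.mem_map.mp hn
    exact a.2
  let F : {l : List {n : ℕ // 1 ≤ n} // l ≠ []} → {w : List ℕ // w ∈ PerWords Aren 1} :=
    fun l => ⟨wd (l.1.map Subtype.val), wd_per (hmapne l) (hmapv l)⟩
  have hinj : Function.Injective F := by
    intro l₁ l₂ h
    have h2 := wd_inj _ _ (hmapv l₁) (hmapv l₂) (congrArg Subtype.val h)
    exact Subtype.ext (List.map_injective_iff.mpr Subtype.val_injective h2)
  have hsurj : Function.Surjective F := by
    rintro ⟨w, hw⟩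
    obtain ⟨l, hlne, hlv, hwl⟩ := per_surj_aux w.length w le_rfl hw
    refine ⟨⟨l.pmap (fun n h => (⟨n, h⟩ : {n : ℕ // 1 ≤ n})) hlv, ?_⟩, ?_⟩
    · intro h
      apply hlne
      have := congrArg List.length h
      simp only [List.length_pmap] at this
      exact List.length_eq_zero_iff.mp this
    · apply Subtype.ext
      show wd ((l.pmap _ hlv).map Subtype.val) = w
      rw [map_val_pmap]
      exact hwl
  rw [← (Equiv.ofBijective F ⟨hinj, hsurj⟩).tsum_eq]
  have hterm : ∀ l : {l : List {n : ℕ // 1 ≤ n} // l ≠ []},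
      ENNReal.ofReal (Real.exp (-s * S Aren psiRen ((Equiv.ofBijective F ⟨hinj, hsurj⟩) l).1))
        = (l.1.map (fun a => gE s a.1)).prod := by
    intro l
    show ENNReal.ofReal (Real.exp (-s * S Aren psiRen (wd (l.1.map Subtype.val)))) = _
    rw [S_wd (hmapne l) (hmapv l), List.map_map]
    exact exp_sum_list s l.1
  exact (tsum_congr hterm).trans (tsum_ne_list' (fun a : {n : ℕ // 1 ≤ n} => gE s a.1))

/-! ### Window words -/

lemma S_desc {n m : ℕ} (h2 : 2 ≤ m) (hmn : m ≤ n) :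
    S Aren psiRen (desc n m)
      = Real.log ((n:ℝ)*((n:ℝ)+1)) - Real.log (((m:ℝ)-1)*(m:ℝ)) := by
  obtain ⟨hw, hne, hh, hl⟩ := desc_words (by omega) hmn
  rw [S_eq hw (by rw [show (desc n m).getLast hw.1 = m from hl]; omega)]
  exact sum_desc h2 hmn

lemma desc_head? {n m : ℕ} (h1 : 1 ≤ m) (hmn : m ≤ n) : (desc n m).head? = some n := by
  obtain ⟨hw, hne, hh, hl⟩ := desc_words h1 hmn
  rw [List.head?_eq_head hne, hh]

noncomputable def M2 (η : ℝ) : ℕ := max 3 ⌈2 * Real.exp η / (Real.exp η - 1)⌉₊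

lemma exists_desc_window {η T : ℝ} (hη : 0 < η) (hT : Real.log 3 ≤ T) {n : ℕ} (hn : 2 ≤ n)
    (hbig : T + Real.log (((M2 η : ℕ) : ℝ) * (((M2 η : ℕ) : ℝ) + 1))
      < Real.log ((n:ℝ)*((n:ℝ)+1))) :
    ∃ m, 2 ≤ m ∧ m ≤ n ∧
      T - η < Real.log ((n:ℝ)*((n:ℝ)+1)) - Real.log (((m:ℝ)-1)*(m:ℝ)) ∧
      Real.log ((n:ℝ)*((n:ℝ)+1)) - Real.log (((m:ℝ)-1)*(m:ℝ)) ≤ T := by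
  classical
  have hn2 : (2:ℝ) ≤ (n:ℝ) := by exact_mod_cast hn
  set L := Real.log ((n:ℝ)*((n:ℝ)+1)) with hL
  set Q : ℕ → Prop := fun j => L - Real.log (((j:ℝ)+1)*((j:ℝ)+2)) ≤ T with hQ
  have hex : Q (n - 2) := by
    have hcast : ((n-2:ℕ):ℝ) = (n:ℝ) - 2 := by
      rw [Nat.cast_sub hn]
      norm_num
    show L - Real.log ((((n-2:ℕ):ℝ)+1)*(((n-2:ℕ):ℝ)+2)) ≤ T
    rw [hcast, show (n:ℝ) - 2 + 1 = (n:ℝ) - 1 from by ring,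
      show (n:ℝ) - 2 + 2 = (n:ℝ) from by ring]
    have e1 : L = Real.log (n:ℝ) + Real.log ((n:ℝ)+1) :=
      Real.log_mul (by linarith) (by linarith)
    have e2 : Real.log (((n:ℝ)-1)*(n:ℝ)) = Real.log ((n:ℝ)-1) + Real.log (n:ℝ) :=
      Real.log_mul (by linarith) (by linarith)
    have e3 : Real.log ((n:ℝ)+1) ≤ Real.log (3*((n:ℝ)-1)) :=
      Real.log_le_log (by linarith) (by linarith)
    have e4 : Real.log (3*((n:ℝ)-1)) = Real.log 3 + Real.log ((n:ℝ)-1) :=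
      Real.log_mul (by norm_num) (by linarith)
    linarith
  have hfin : ∃ j, Q j := ⟨n - 2, hex⟩
  set k := Nat.find hfin with hk
  have hQk : Q k := Nat.find_spec hfin
  have hkle : k ≤ n - 2 := Nat.find_min' hfin hex
  have hM3 : 3 ≤ M2 η := le_max_left _ _
  have hMceil : 2 * Real.exp η / (Real.exp η - 1) ≤ ((M2 η : ℕ) : ℝ) :=
    le_trans (Nat.le_ceil _) (Nat.cast_le.mpr (le_max_right _ _))
  have heη : 1 < Real.exp η := by
    have := Real.add_one_le_exp η
    linarith
  have hkM : M2 η ≤ k := by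
    by_contra hcon
    push_neg at hcon
    have hQfail : ¬ Q k := by
      show ¬ (L - Real.log (((k:ℝ)+1)*((k:ℝ)+2)) ≤ T)
      push_neg
      have hkM2 : (k:ℝ) + 1 ≤ ((M2 η : ℕ) : ℝ) := by
        have : k + 1 ≤ M2 η := hcon
        exact_mod_cast this
      have h1 : ((k:ℝ)+1)*((k:ℝ)+2) ≤ ((M2 η : ℕ) : ℝ) * (((M2 η : ℕ) : ℝ) + 1) := by
        nlinarith [Nat.cast_nonneg (α := ℝ) k]
      have h2 : Real.log (((k:ℝ)+1)*((k:ℝ)+2))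
          ≤ Real.log (((M2 η : ℕ) : ℝ) * (((M2 η : ℕ) : ℝ) + 1)) :=
        Real.log_le_log (by positivity) h1
      linarith
    exact hQfail hQk
  refine ⟨k + 2, by omega, by omega, ?_, ?_⟩
  · -- lower bound
    have hk3 : 3 ≤ k := le_trans hM3 hkM
    have hprev : ¬ Q (k - 1) := Nat.find_min hfin (by omega)
    have hcast : ((k-1:ℕ):ℝ) = (k:ℝ) - 1 := by
      rw [Nat.cast_sub (by omega)]
      norm_num
    have hprev' : T < L - Real.log ((k:ℝ)*((k:ℝ)+1)) := by
      have := hprev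
      show _
      rw [hQ] at this
      simp only [not_le] at this
      rw [hcast, show (k:ℝ) - 1 + 1 = (k:ℝ) from by ring,
        show (k:ℝ) - 1 + 2 = (k:ℝ) + 1 from by ring] at this
      exact this
    have hkR : ((M2 η : ℕ) : ℝ) ≤ (k:ℝ) := by exact_mod_cast hkM
    have hk3R : (3:ℝ) ≤ (k:ℝ) := by exact_mod_cast hk3
    have h5 : 2 * Real.exp η ≤ ((M2 η : ℕ) : ℝ) * (Real.exp η - 1) :=
      (div_le_iff₀ (by linarith)).mp hMceil
    have key : (k:ℝ) + 2 ≤ (k:ℝ) * Real.exp η := by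
      nlinarith
    have hstep : Real.log (((k:ℝ)+2)) - Real.log (k:ℝ) ≤ η := by
      have h6 : Real.log ((k:ℝ)+2) ≤ Real.log ((k:ℝ) * Real.exp η) :=
        Real.log_le_log (by linarith) key
      rw [Real.log_mul (by linarith) (by positivity), Real.log_exp] at h6
      linarith
    push_cast
    rw [show ((k:ℝ)+2-1) = (k:ℝ)+1 from by ring]
    rw [Real.log_mul (by linarith) (by linarith)]
    rw [Real.log_mul (by linarith) (by linarith)] at hprev'
    linarith
  · -- upper bound
    have := hQk
    rw [hQ] at this
    push_cast
    rw [show ((k:ℝ)+2-1) = (k:ℝ)+1 from by ring]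
    convert this using 3 <;> ring

lemma window_word {η T : ℝ} (hη : 0 < η) (hT : Real.log 3 ≤ T) :
    ∃ wf : ℕ → List ℕ, Function.Injective wf ∧ ∀ d : ℕ,
      wf d ∈ Words Aren ∧ T - η < S Aren psiRen (wf d) ∧ S Aren psiRen (wf d) ≤ T := by
  classical
  set B := T + Real.log (((M2 η : ℕ) : ℝ) * (((M2 η : ℕ) : ℝ) + 1)) with hB
  set N := ⌈Real.exp B⌉₊ + 2 with hN
  have hkey : ∀ d : ℕ, ∃ m, 2 ≤ m ∧ m ≤ N + d ∧
      T - η < Real.log (((N+d:ℕ):ℝ)*(((N+d:ℕ):ℝ)+1)) - Real.log (((m:ℝ)-1)*(m:ℝ)) ∧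
      Real.log (((N+d:ℕ):ℝ)*(((N+d:ℕ):ℝ)+1)) - Real.log (((m:ℝ)-1)*(m:ℝ)) ≤ T := by
    intro d
    have hn2 : 2 ≤ N + d := by omega
    apply exists_desc_window hη hT hn2
    have h1 : Real.exp B < ((N+d:ℕ):ℝ) := by
      have h2 : Real.exp B ≤ (⌈Real.exp B⌉₊ : ℝ) := Nat.le_ceil _
      have h3 : (⌈Real.exp B⌉₊ : ℝ) + 2 ≤ ((N+d:ℕ):ℝ) := by
        have : ⌈Real.exp B⌉₊ + 2 ≤ N + d := by omega
        exact_mod_cast this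
      linarith
    have hpos : (0:ℝ) < ((N+d:ℕ):ℝ) := by exact_mod_cast (show 0 < N + d by omega)
    have h4 : B < Real.log ((N+d:ℕ):ℝ) := (Real.lt_log_iff_exp_lt hpos).mpr h1
    have h5 : Real.log ((N+d:ℕ):ℝ) ≤ Real.log (((N+d:ℕ):ℝ)*(((N+d:ℕ):ℝ)+1)) := by
      apply Real.log_le_log (by positivity)
      nlinarith [Nat.cast_nonneg (α := ℝ) (N+d)]
    linarith
  choose mf hmf using hkey
  refine ⟨fun d => desc (N + d) (mf d), ?_, ?_⟩
  · intro d₁ d₂ h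
    have h' : desc (N + d₁) (mf d₁) = desc (N + d₂) (mf d₂) := h
    have h1 := desc_head? (by have := (hmf d₁).1; omega) (hmf d₁).2.1
    have h2 := desc_head? (by have := (hmf d₂).1; omega) (hmf d₂).2.1
    rw [h'] at h1
    rw [h2] at h1
    have : N + d₁ = N + d₂ := by
      have := Option.some.inj h1
      omega
    omega
  · intro d
    obtain ⟨hm2, hmn, hlo, hhi⟩ := hmf d
    refine ⟨(desc_words (by omega) hmn).1, ?_, ?_⟩
    · rw [S_desc hm2 hmn]
      exact_mod_cast hlo
    · rw [S_desc hm2 hmn]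
      exact_mod_cast hhi

lemma tsum_top_of_inj {ι : Type*} {f : ι → ℝ≥0∞} (wf : ℕ → ι)
    (hinj : Function.Injective wf) {c : ℝ≥0∞} (hc : c ≠ 0) (hb : ∀ d, c ≤ f (wf d)) :
    ∑' i, f i = ⊤ := by
  have h1 : ∑' d : ℕ, f (wf d) ≤ ∑' i, f i :=
    ENNReal.tsum_comp_le_tsum_of_injective hinj f
  have h2 : (∑' _ : ℕ, c) ≤ ∑' d : ℕ, f (wf d) := ENNReal.tsum_le_tsum hb
  have h3 : (∑' _ : ℕ, c) = ⊤ := ENNReal.tsum_const_eq_top_of_ne_zero hc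
  exact top_unique (h3 ▸ le_trans h2 h1)

/-! ### Parts A and B -/

lemma partA (T : ℝ) (hT : 0 < T) (β : ℝ) :
    (∑' w : {w : List ℕ // w ∈ Words Aren ∧ T < S Aren psiRen w},
        ENNReal.ofReal (Real.exp (-β * S Aren psiRen w.1))) = ⊤ := by
  have hlog3 : 0 < Real.log 3 := Real.log_pos (by norm_num)
  obtain ⟨wf, hinj, hprop⟩ := window_word hlog3 (by linarith : Real.log 3 ≤ T + Real.log 3)
  set ι : ℕ → {w : List ℕ // w ∈ Words Aren ∧ T < S Aren psiRen w} := fun d =>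
    ⟨wf d, (hprop d).1, by have := (hprop d).2.1; linarith⟩ with hι
  have hιinj : Function.Injective ι := by
    intro d₁ d₂ h
    exact hinj (congrArg Subtype.val h)
  apply tsum_top_of_inj ι hιinj
    (c := ENNReal.ofReal (Real.exp (-|β| * (T + Real.log 3))))
    (ne_of_gt (ENNReal.ofReal_pos.mpr (Real.exp_pos _)))
  intro d
  apply ENNReal.ofReal_le_ofReal
  apply Real.exp_le_exp.mpr
  have h1 : T < S Aren psiRen (wf d) := by have := (hprop d).2.1; linarith
  have h2 : S Aren psiRen (wf d) ≤ T + Real.log 3 := (hprop d).2.2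
  rcases abs_cases β with ⟨he, _⟩ | ⟨he, hb⟩
  · rw [he]
    nlinarith
  · rw [he]
    nlinarith

lemma partSum_count (C : Set (List ℕ)) (η T : ℝ) :
    partSum Aren (fun _ => 0) psiRen C η T
      = ∑' _ : {w : List ℕ // w ∈ C ∧ T - η < S Aren psiRen w ∧ S Aren psiRen w ≤ T},
          (1 : ℝ≥0∞) := by
  unfold partSum
  refine tsum_congr (fun w => ?_)
  rw [S_zero]
  simp

lemma elog_top : elog ⊤ = ⊤ := by
  unfold elog
  simp

lemma partB {η : ℝ} (hη : 0 < η) :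
    pressure Aren (fun _ => 0) psiRen (Words Aren) η = ⊤ := by
  unfold pressure
  have hev : ∀ᶠ T in Filter.atTop,
      ((T⁻¹ : ℝ) : EReal) * elog (partSum Aren (fun _ => 0) psiRen (Words Aren) η T)
        = (⊤ : EReal) := by
    filter_upwards [Filter.eventually_ge_atTop (max (Real.log 3) 1)] with T hT
    have hT1 : (1:ℝ) ≤ T := le_trans (le_max_right _ _) hT
    have hT3 : Real.log 3 ≤ T := le_trans (le_max_left _ _) hT
    have hsum : partSum Aren (fun _ => 0) psiRen (Words Aren) η T = ⊤ := by
      rw [partSum_count]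
      obtain ⟨wf, hinj, hprop⟩ := window_word hη hT3
      set ι : ℕ → {w : List ℕ // w ∈ Words Aren ∧ T - η < S Aren psiRen w
          ∧ S Aren psiRen w ≤ T} := fun d =>
        ⟨wf d, (hprop d).1, (hprop d).2.1, (hprop d).2.2⟩ with hι
      have hιinj : Function.Injective ι := fun d₁ d₂ h => hinj (congrArg Subtype.val h)
      exact tsum_top_of_inj ι hιinj (c := 1) one_ne_zero (fun d => le_rfl)
    rw [hsum, elog_top]
    exact EReal.mul_top_of_pos (by exact_mod_cast inv_pos.mpr (by linarith : (0:ℝ) < T))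
  rw [Filter.limsup_congr hev]
  simp

/-! ### Part C : upper bound -/

lemma elog_le {x : ℝ≥0∞} {y : ℝ} (h : x ≤ ENNReal.ofReal (Real.exp y)) :
    elog x ≤ (y : EReal) := by
  unfold elog
  by_cases h0 : x = 0
  · rw [if_pos h0]
    exact bot_le
  · rw [if_neg h0]
    have hxt : x ≠ ⊤ := by
      intro hx
      rw [hx] at h
      exact absurd (lt_of_le_of_lt h ENNReal.ofReal_lt_top) (lt_irrefl _)
    rw [if_neg hxt]
    rw [EReal.coe_le_coe_iff]
    have h1 : x.toReal ≤ Real.exp y := by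
      have := ENNReal.toReal_mono (ENNReal.ofReal_ne_top) h
      rwa [ENNReal.toReal_ofReal (le_of_lt (Real.exp_pos _))] at this
    have h2 : 0 < x.toReal := ENNReal.toReal_pos h0 hxt
    calc Real.log x.toReal ≤ Real.log (Real.exp y) := Real.log_le_log h2 h1
      _ = y := Real.log_exp y

/-- The per-window count. -/
noncomputable def NN (η T : ℝ) : ℝ≥0∞ := partSum Aren (fun _ => 0) psiRen (PerWords Aren 1) η T

lemma NN_le {s T η : ℝ} (hs : 0 < s) :
    NN η T ≤ ENNReal.ofReal (Real.exp (s * T)) *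
      ∑' w : {w : List ℕ // w ∈ PerWords Aren 1},
        ENNReal.ofReal (Real.exp (-s * S Aren psiRen w.1)) := by
  rw [NN, partSum_count]
  have hstep : (∑' _ : {w : List ℕ // w ∈ PerWords Aren 1 ∧ T - η < S Aren psiRen w
      ∧ S Aren psiRen w ≤ T}, (1:ℝ≥0∞))
      ≤ ∑' w : {w : List ℕ // w ∈ PerWords Aren 1 ∧ T - η < S Aren psiRen w
      ∧ S Aren psiRen w ≤ T},
        ENNReal.ofReal (Real.exp (s * T)) * ENNReal.ofReal (Real.exp (-s * S Aren psiRen w.1)) := by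
    apply ENNReal.tsum_le_tsum
    intro w
    rw [← ENNReal.ofReal_mul (le_of_lt (Real.exp_pos _)), ← Real.exp_add]
    rw [show (1:ℝ≥0∞) = ENNReal.ofReal (Real.exp 0) from by simp]
    apply ENNReal.ofReal_le_ofReal
    apply Real.exp_le_exp.mpr
    have := w.2.2.2
    nlinarith
  refine le_trans hstep ?_
  rw [ENNReal.tsum_mul_left]
  apply mul_le_mul_right
  exact ENNReal.tsum_comp_le_tsum_of_injective
    (f := fun w : {w : List ℕ // w ∈ PerWords Aren 1 ∧ T - η < S Aren psiRen w
      ∧ S Aren psiRen w ≤ T} => (⟨w.1, w.2.1⟩ : {w : List ℕ // w ∈ PerWords Aren 1}))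
    (by
      intro w₁ w₂ h
      have h' : (⟨w₁.1, w₁.2.1⟩ : {w : List ℕ // w ∈ PerWords Aren 1}).1
          = (⟨w₂.1, w₂.2.1⟩ : {w : List ℕ // w ∈ PerWords Aren 1}).1 := congrArg Subtype.val h
      exact Subtype.ext h') _

lemma partC_upper {η : ℝ} :
    Filter.limsup (fun T : ℝ => ((T⁻¹ : ℝ) : EReal) * elog (NN η T)) Filter.atTop
      ≤ (1 : EReal) := by
  by_contra hcon
  replace hcon := not_le.mp hcon
  obtain ⟨s, hs1, hs2⟩ := EReal.exists_between_coe_real hcon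
  have hs1' : (1:ℝ) < s := by exact_mod_cast hs1
  have key : Filter.limsup (fun T : ℝ => ((T⁻¹ : ℝ) : EReal) * elog (NN η T)) Filter.atTop
      ≤ (s : EReal) := by
    set D := (1 - G s)⁻¹ with hD
    have hEt : (∑' w : {w : List ℕ // w ∈ PerWords Aren 1},
        ENNReal.ofReal (Real.exp (-s * S Aren psiRen w.1))) ≤ D := by
      rw [per_tsum, hD, ← ENNReal.tsum_geometric]
      apply ENNReal.tsum_le_tsum
      intro k
      rw [pow_succ]
      calc (G s) ^ k * G s ≤ (G s) ^ k * 1 := mul_le_mul_right (le_of_lt (G_lt_one hs1')) _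
        _ = (G s) ^ k := mul_one _
    have hDlt : D < ⊤ := ENNReal.inv_lt_top.mpr (tsub_pos_of_lt (G_lt_one hs1'))
    have hDt : D ≠ ⊤ := ne_of_lt hDlt
    set a := Real.log (D.toReal + 1) with ha
    have hDle : D ≤ ENNReal.ofReal (Real.exp a) := by
      rw [ha, Real.exp_log (by positivity : (0:ℝ) < D.toReal + 1)]
      calc D = ENNReal.ofReal D.toReal := (ENNReal.ofReal_toReal hDt).symm
        _ ≤ ENNReal.ofReal (D.toReal + 1) := ENNReal.ofReal_le_ofReal (by linarith)
    have hNle : ∀ T : ℝ, NN η T ≤ ENNReal.ofReal (Real.exp (s * T + a)) := by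
      intro T
      calc NN η T ≤ ENNReal.ofReal (Real.exp (s*T)) * (∑' w : {w : List ℕ // w ∈ PerWords Aren 1},
            ENNReal.ofReal (Real.exp (-s * S Aren psiRen w.1))) := NN_le (by linarith)
        _ ≤ ENNReal.ofReal (Real.exp (s*T)) * ENNReal.ofReal (Real.exp a) :=
            mul_le_mul_right (le_trans hEt hDle) _
        _ = ENNReal.ofReal (Real.exp (s*T + a)) := by
            rw [← ENNReal.ofReal_mul (le_of_lt (Real.exp_pos _)), ← Real.exp_add]
    have hev : ∀ᶠ T in Filter.atTop, ((T⁻¹ : ℝ) : EReal) * elog (NN η T)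
        ≤ ((T⁻¹ * (s * T + a) : ℝ) : EReal) := by
      filter_upwards [Filter.eventually_ge_atTop (1:ℝ)] with T hT1
      have hT0 : (0:ℝ) < T := by linarith
      by_cases h0 : NN η T = 0
      · rw [h0, show elog 0 = ⊥ from by unfold elog; simp]
        rw [EReal.mul_bot_of_pos (by exact_mod_cast inv_pos.mpr hT0)]
        exact bot_le
      · have hle := elog_le (hNle T)
        have hnt : NN η T ≠ ⊤ := by
          intro hx
          have h2 := hNle T
          rw [hx] at h2
          exact absurd h2 (not_le.mpr ENNReal.ofReal_lt_top)
        have helog : elog (NN η T) = ((Real.log (NN η T).toReal : ℝ) : EReal) := by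
          unfold elog
          rw [if_neg h0, if_neg hnt]
        rw [helog, ← EReal.coe_mul, EReal.coe_le_coe_iff]
        have hlog : Real.log (NN η T).toReal ≤ s * T + a := by
          rw [helog, EReal.coe_le_coe_iff] at hle
          exact hle
        exact mul_le_mul_of_nonneg_left hlog (le_of_lt (inv_pos.mpr hT0))
    have hlim : Filter.Tendsto (fun T : ℝ => ((T⁻¹ * (s * T + a) : ℝ) : EReal))
        Filter.atTop (nhds (s : EReal)) := by
      rw [EReal.tendsto_coe]
      have h1 : Filter.Tendsto (fun T : ℝ => s + a * T⁻¹) Filter.atTop (nhds (s + a * 0)) :=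
        tendsto_const_nhds.add (tendsto_inv_atTop_zero.const_mul a)
      rw [mul_zero, add_zero] at h1
      apply h1.congr'
      filter_upwards [Filter.eventually_ge_atTop (1:ℝ)] with T hT1
      have hT0 : T ≠ 0 := by intro h; rw [h] at hT1; linarith
      field_simp
    calc Filter.limsup (fun T : ℝ => ((T⁻¹ : ℝ) : EReal) * elog (NN η T)) Filter.atTop
        ≤ Filter.limsup (fun T : ℝ => ((T⁻¹ * (s * T + a) : ℝ) : EReal)) Filter.atTop :=
          limsup_le_limsup hev
      _ = (s:EReal) := hlim.limsup_eq
  exact absurd (lt_of_le_of_lt key hs2) (lt_irrefl _)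

/-! ### Part C : lower bound -/

lemma S_wd_Wt {l : List ℕ} (hne : l ≠ []) (hv : ∀ n ∈ l, 1 ≤ n) :
    S Aren psiRen (wd l) = (l.map Wt).sum := S_wd hne hv

lemma sum_Wt_nonneg (l : List {n : ℕ // 1 ≤ n}) : 0 ≤ (l.map (fun a => Wt a.1)).sum := by
  apply List.sum_nonneg
  intro x hx
  obtain ⟨a, _, rfl⟩ := List.mem_map.mp hx
  exact Wt_nonneg a.2

lemma partC_lower {η : ℝ} (hη : 0 < η) :
    (1 : EReal) ≤ Filter.limsup (fun T : ℝ => ((T⁻¹ : ℝ) : EReal) * elog (NN η T))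
      Filter.atTop := by
  classical
  by_contra hcon
  replace hcon := not_le.mp hcon
  obtain ⟨c', hc1', hc2'⟩ := EReal.exists_between_coe_real hcon
  set c : ℝ := max c' (1/2) with hc
  have hc1 : c < 1 := by
    have h1' : c' < 1 := by exact_mod_cast hc2'
    exact max_lt h1' (by norm_num)
  have hc0 : (0:ℝ) < c := lt_of_lt_of_le (by norm_num) (le_max_right _ _)
  have hlimc : Filter.limsup (fun T : ℝ => ((T⁻¹ : ℝ) : EReal) * elog (NN η T))
      Filter.atTop < (c : EReal) :=
    lt_of_lt_of_le hc1' (by exact_mod_cast le_max_left c' (1/2))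
  set s : ℝ := (c+1)/2 with hsdef
  have hcs : c < s := by rw [hsdef]; linarith
  have hs1 : s < 1 := by rw [hsdef]; linarith
  have hs0 : (0:ℝ) < s := by linarith
  have hev := eventually_lt_of_limsup_lt hlimc
  obtain ⟨T₀', hT₀'⟩ := Filter.eventually_atTop.mp hev
  set T₀ : ℝ := max T₀' 1 with hT₀
  have hT₀1 : (1:ℝ) ≤ T₀ := le_max_right _ _
  have hcount : ∀ T, T₀ ≤ T → NN η T ≤ ENNReal.ofReal (Real.exp (c * T)) := by
    intro T hT
    have hT1 : (1:ℝ) ≤ T := le_trans hT₀1 hT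
    have hT0 : (0:ℝ) < T := by linarith
    have hfT := hT₀' T (le_trans (le_max_left _ _) hT)
    by_cases h0 : NN η T = 0
    · rw [h0]; exact zero_le
    by_cases ht : NN η T = ⊤
    · exfalso
      rw [ht, elog_top, EReal.mul_top_of_pos (by exact_mod_cast inv_pos.mpr hT0)] at hfT
      exact absurd hfT not_top_lt
    · have helog : elog (NN η T) = ((Real.log (NN η T).toReal : ℝ) : EReal) := by
        unfold elog
        rw [if_neg h0, if_neg ht]
      rw [helog, ← EReal.coe_mul, EReal.coe_lt_coe_iff] at hfT
      have hlog : Real.log (NN η T).toReal < c * T := by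
        have h2 := mul_lt_mul_of_pos_left hfT hT0
        rw [← mul_assoc, mul_inv_cancel₀ (ne_of_gt hT0), one_mul] at h2
        linarith
      have hpos : 0 < (NN η T).toReal := ENNReal.toReal_pos h0 ht
      have h2 : (NN η T).toReal ≤ Real.exp (c * T) := by
        calc (NN η T).toReal = Real.exp (Real.log (NN η T).toReal) := (Real.exp_log hpos).symm
          _ ≤ Real.exp (c*T) := Real.exp_le_exp.mpr (le_of_lt hlog)
      calc NN η T = ENNReal.ofReal (NN η T).toReal := (ENNReal.ofReal_toReal ht).symm
        _ ≤ _ := ENNReal.ofReal_le_ofReal h2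
  -- the tail sum
  set f : {w : List ℕ // w ∈ PerWords Aren 1 ∧ T₀ < S Aren psiRen w} → ℝ≥0∞ :=
    fun w => ENNReal.ofReal (Real.exp (-s * S Aren psiRen w.1)) with hf
  -- (i) divergence
  have hdiv : ∑' w, f w = ⊤ := by
    set n₀ : ℕ := ⌈Real.exp T₀⌉₊ + 1 with hn₀
    have hn₀1 : 1 ≤ n₀ := by omega
    have hWn₀ : T₀ < Wt n₀ := by
      have hpos : (0:ℝ) < (n₀:ℝ) := by exact_mod_cast (show 0 < n₀ by omega)
      have h1 : Real.exp T₀ < (n₀:ℝ) := by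
        have h2 : Real.exp T₀ ≤ (⌈Real.exp T₀⌉₊ : ℝ) := Nat.le_ceil _
        have h3 : ((⌈Real.exp T₀⌉₊ : ℕ) : ℝ) + 1 = (n₀:ℝ) := by rw [hn₀]; push_cast; ring
        linarith
      have h2 : T₀ < Real.log (n₀:ℝ) := (Real.lt_log_iff_exp_lt hpos).mpr h1
      have h3 : Real.log (n₀:ℝ) ≤ Wt n₀ := by
        apply Real.log_le_log hpos
        nlinarith
      linarith
    have hvalid : ∀ l : List {n : ℕ // 1 ≤ n},
        ∀ n ∈ ((⟨n₀, hn₀1⟩ : {n : ℕ // 1 ≤ n}) :: l).map Subtype.val, 1 ≤ n := by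
      intro l n hn
      obtain ⟨a, _, rfl⟩ := List.mem_map.mp hn
      exact a.2
    have hSmap : ∀ l : List {n : ℕ // 1 ≤ n},
        S Aren psiRen (wd (((⟨n₀, hn₀1⟩ : {n : ℕ // 1 ≤ n}) :: l).map Subtype.val))
          = Wt n₀ + (l.map (fun a => Wt a.1)).sum := by
      intro l
      rw [S_wd_Wt (by simp) (hvalid l), List.map_map, List.map_cons, List.sum_cons]
      rfl
    set ι : List {n : ℕ // 1 ≤ n} → {w : List ℕ // w ∈ PerWords Aren 1 ∧ T₀ < S Aren psiRen w} :=
      fun l => ⟨wd (((⟨n₀, hn₀1⟩ : {n : ℕ // 1 ≤ n}) :: l).map Subtype.val),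
        wd_per (by simp) (hvalid l), by
          rw [hSmap l]
          have := sum_Wt_nonneg l
          linarith⟩ with hι
    have hιinj : Function.Injective ι := by
      intro l₁ l₂ h
      have h1 : wd (((⟨n₀, hn₀1⟩ : {n : ℕ // 1 ≤ n}) :: l₁).map Subtype.val)
          = wd (((⟨n₀, hn₀1⟩ : {n : ℕ // 1 ≤ n}) :: l₂).map Subtype.val) :=
        congrArg Subtype.val h
      have h2 := wd_inj _ _ (hvalid l₁) (hvalid l₂) h1
      have h3 : ((⟨n₀, hn₀1⟩ : {n : ℕ // 1 ≤ n}) :: l₁) = (⟨n₀, hn₀1⟩ : {n : ℕ // 1 ≤ n}) :: l₂ :=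
        List.map_injective_iff.mpr Subtype.val_injective h2
      exact List.tail_eq_of_cons_eq h3
    have hcomp : ∑' l : List {n : ℕ // 1 ≤ n}, f (ι l) ≤ ∑' w, f w :=
      ENNReal.tsum_comp_le_tsum_of_injective hιinj f
    have hterm : ∀ l : List {n : ℕ // 1 ≤ n},
        f (ι l) = ENNReal.ofReal (Real.exp (-s * Wt n₀)) * (l.map (fun a => gE s a.1)).prod := by
      intro l
      show ENNReal.ofReal (Real.exp (-s * S Aren psiRen (wd _))) = _
      rw [hSmap l, show -s * (Wt n₀ + (l.map (fun a => Wt a.1)).sum)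
          = (-s * Wt n₀) + (-s * (l.map (fun a => Wt a.1)).sum) from by ring,
        Real.exp_add, ENNReal.ofReal_mul (le_of_lt (Real.exp_pos _)), exp_sum_list]
    have htop : ∑' l : List {n : ℕ // 1 ≤ n}, f (ι l) = ⊤ := by
      rw [tsum_congr hterm, ENNReal.tsum_mul_left, tsum_list]
      have h5 : (∑' k : ℕ, (G s)^k) = ⊤ := by
        apply top_unique
        calc (⊤:ℝ≥0∞) = ∑' _ : ℕ, (1:ℝ≥0∞) :=
              (ENNReal.tsum_const_eq_top_of_ne_zero one_ne_zero).symm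
          _ ≤ ∑' k : ℕ, (G s)^k :=
              ENNReal.tsum_le_tsum (fun k => one_le_pow_of_one_le' (one_le_G hs1) k)
      rw [show (∑' a : {n : ℕ // 1 ≤ n}, gE s a.1) = G s from rfl, h5]
      exact ENNReal.mul_top (ne_of_gt (ENNReal.ofReal_pos.mpr (Real.exp_pos _)))
    exact top_unique (htop ▸ hcomp)
  -- (ii) convergence
  have hconv : ∑' w, f w < ⊤ := by
    set Wf : {w : List ℕ // w ∈ PerWords Aren 1 ∧ T₀ < S Aren psiRen w} → ℕ :=
      fun w => ⌈(S Aren psiRen w.1 - T₀)/η⌉₊ with hWf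
    have hdecomp : ∑' w, f w = ∑' j : ℕ, ∑' w : {w // Wf w = j}, f w.1 := by
      rw [← (Equiv.sigmaFiberEquiv Wf).tsum_eq f]
      have h0 : ∀ p : Σ j : ℕ, {w // Wf w = j},
          f ((Equiv.sigmaFiberEquiv Wf) p)
            = (fun p : Σ j : ℕ, {w // Wf w = j} => f p.2.1) p := fun p => rfl
      rw [tsum_congr h0, ENNReal.tsum_sigma' (fun p : Σ j : ℕ, {w // Wf w = j} => f p.2.1)]
    set K : ℝ≥0∞ := ENNReal.ofReal (Real.exp ((c-s)*T₀ + s*η)) with hK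
    set r : ℝ≥0∞ := ENNReal.ofReal (Real.exp ((c-s)*η)) with hr
    have hfib : ∀ j : ℕ, (∑' w : {w // Wf w = j}, f w.1) ≤ K * r^j := by
      intro j
      rcases Nat.eq_zero_or_pos j with rfl | hj
      · have hempty : IsEmpty {w // Wf w = 0} := by
          constructor
          rintro ⟨w, hw⟩
          have h1 : 0 < (S Aren psiRen w.1 - T₀)/η := div_pos (by have := w.2.2; linarith) hη
          have h2 := Nat.ceil_pos.mpr h1
          simp only [hWf] at hw
          omega
        rw [tsum_empty]
        exact zero_le
      · have hcj : ∀ w : {w // Wf w = j}, T₀ + ((j:ℝ)-1)*η < S Aren psiRen w.1.1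
            ∧ S Aren psiRen w.1.1 ≤ T₀ + (j:ℝ)*η := by
          intro w
          have hceil : ⌈(S Aren psiRen w.1.1 - T₀)/η⌉₊ = j := w.2
          constructor
          · have h1 : ((j-1:ℕ):ℝ) < (S Aren psiRen w.1.1 - T₀)/η :=
              Nat.lt_ceil.mp (by rw [hceil]; omega)
            have hcast : ((j-1:ℕ):ℝ) = (j:ℝ) - 1 := by
              rw [Nat.cast_sub hj]
              norm_num
            rw [hcast] at h1
            have h2 := (lt_div_iff₀ hη).mp h1
            linarith
          · have h4 := Nat.le_ceil ((S Aren psiRen w.1.1 - T₀)/η)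
            rw [hceil] at h4
            have h3 := (div_le_iff₀ hη).mp h4
            linarith
        have hterm : ∀ w : {w // Wf w = j},
            f w.1 ≤ ENNReal.ofReal (Real.exp (-s*(T₀+((j:ℝ)-1)*η))) := by
          intro w
          apply ENNReal.ofReal_le_ofReal
          apply Real.exp_le_exp.mpr
          have h1 := (hcj w).1
          nlinarith
        have hTj : T₀ ≤ T₀ + (j:ℝ)*η := by
          have : (1:ℝ) ≤ (j:ℝ) := by exact_mod_cast hj
          nlinarith
        calc (∑' w : {w // Wf w = j}, f w.1)
            ≤ ∑' _ : {w // Wf w = j}, ENNReal.ofReal (Real.exp (-s*(T₀+((j:ℝ)-1)*η))) :=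
              ENNReal.tsum_le_tsum hterm
          _ = ENNReal.ofReal (Real.exp (-s*(T₀+((j:ℝ)-1)*η)))
              * ∑' _ : {w // Wf w = j}, (1:ℝ≥0∞) := by
              calc (∑' _ : {w // Wf w = j}, ENNReal.ofReal (Real.exp (-s*(T₀+((j:ℝ)-1)*η))))
                  = ∑' _ : {w // Wf w = j},
                    ENNReal.ofReal (Real.exp (-s*(T₀+((j:ℝ)-1)*η))) * 1 := by simp
                _ = _ := ENNReal.tsum_mul_left
          _ ≤ ENNReal.ofReal (Real.exp (-s*(T₀+((j:ℝ)-1)*η))) * NN η (T₀ + (j:ℝ)*η) := by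
              apply mul_le_mul_right
              rw [NN, partSum_count]
              refine ENNReal.tsum_comp_le_tsum_of_injective (f := fun w : {w // Wf w = j} =>
                (⟨w.1.1, w.1.2.1, by
                    have h1 := (hcj w).1
                    have : T₀ + (j:ℝ)*η - η = T₀ + ((j:ℝ)-1)*η := by ring
                    rw [this]
                    exact h1, (hcj w).2⟩ :
                  {w : List ℕ // w ∈ PerWords Aren 1
                    ∧ (T₀ + (j:ℝ)*η) - η < S Aren psiRen w
                    ∧ S Aren psiRen w ≤ T₀ + (j:ℝ)*η})) ?_ _
              intro w₁ w₂ h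
              have h1 := congrArg (Subtype.val : {w : List ℕ // w ∈ PerWords Aren 1
                    ∧ (T₀ + (j:ℝ)*η) - η < S Aren psiRen w
                    ∧ S Aren psiRen w ≤ T₀ + (j:ℝ)*η} → List ℕ) h
              exact Subtype.ext (Subtype.ext h1)
          _ ≤ ENNReal.ofReal (Real.exp (-s*(T₀+((j:ℝ)-1)*η)))
              * ENNReal.ofReal (Real.exp (c * (T₀ + (j:ℝ)*η))) :=
              mul_le_mul_right (hcount _ hTj) _
          _ = K * r^j := by
              rw [hK, hr, ← ENNReal.ofReal_pow (le_of_lt (Real.exp_pos _)),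
                ← Real.exp_nat_mul,
                ← ENNReal.ofReal_mul (le_of_lt (Real.exp_pos _)),
                ← ENNReal.ofReal_mul (le_of_lt (Real.exp_pos _)),
                ← Real.exp_add, ← Real.exp_add]
              congr 1
              ring
    have hr1 : r < 1 := by
      rw [hr, show (1:ℝ≥0∞) = ENNReal.ofReal 1 from by simp,
        ENNReal.ofReal_lt_ofReal_iff (by norm_num)]
      rw [show (1:ℝ) = Real.exp 0 from (Real.exp_zero).symm]
      apply Real.exp_lt_exp.mpr
      nlinarith
    calc ∑' w, f w = ∑' j : ℕ, ∑' w : {w // Wf w = j}, f w.1 := hdecomp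
      _ ≤ ∑' j : ℕ, K * r^j := ENNReal.tsum_le_tsum hfib
      _ = K * (1-r)⁻¹ := by rw [ENNReal.tsum_mul_left, ENNReal.tsum_geometric]
      _ < ⊤ := ENNReal.mul_lt_top ENNReal.ofReal_lt_top
          (ENNReal.inv_lt_top.mpr (tsub_pos_of_lt hr1))
  rw [hdiv] at hconv
  exact absurd hconv (lt_irrefl _)

end Renewal

/-- For the renewal shift with the potential `ψ` above: for every `T > 0`and `β ∈ ℝ`
the tail sum `Σ_{ω ∈ Σ*, T < S_ω ψ} e^{-β S_ω ψ}` diverges; consequently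
`P_ψ(0, Σ*) = +∞`, while `P_ψ(0, Σ₁^per) = 1`. -/
theorem renewal_pressure_infinite :
    (∀ T : ℝ, 0 < T → ∀ β : ℝ,
      (∑' w : {w : List ℕ // w ∈ Words Aren ∧ T < S Aren psiRen w},
        ENNReal.ofReal (Real.exp (-β * S Aren psiRen w.1))) = ⊤) ∧
    (∀ η : ℝ, 0 < η →
      pressure Aren (fun _ => 0) psiRen (Words Aren) η = ⊤ ∧
      pressure Aren (fun _ => 0) psiRen (PerWords Aren 1) η = (1 : EReal)) := by
  constructor
  · exact fun T hT β => Renewal.partA T hT β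
  · intro η hη
    refine ⟨Renewal.partB hη, ?_⟩
    exact le_antisymm Renewal.partC_upper (Renewal.partC_lower hη)
end
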